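/- arXiv:1903.11631 — 6 statements merged into one kernel-verified Lean document; each statement's English description precedes it below -/
import Mathlib

section
/- Let x ∈ [0,1] have base-r expansion x = Σ_{n≥1} ε_n r^{-n} with digits ε_n ∈ {0,…,r-1}. If x ∉ D ∪ D̃ (i.e., the digit sequence is not eventually 0, eventually r-1, nor eventually (r-1)/2), then for each n the function g_n is differentiable at x with g'_n(x) ∈ {-1, 1}; moreover g'_n(x) = 1 if ε_n < (r-1)/2 and g'_n(x) = -1 if ε_n > (r-1)/2. -/
open Set Filter MeasureTheory Metric Topology

/-- Distance from `x` to the nearest integer. -/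
noncomputable def phiTW (x : ℝ) : ℝ := Metric.infDist x (Set.range (Int.cast : ℤ → ℝ))

/-- The Takagi–Van der Waerden function `f_r`. -/
noncomputable def fTW (r : ℕ) (x : ℝ) : ℝ :=
  ∑' n : ℕ, (1 / (r : ℝ) ^ n) * phiTW ((r : ℝ) ^ n * x)

/-- `D_n = { k / r^(n-1) : k ∈ ℤ } ∩ [0,1]` (intended for `n ≥ 1`). -/
def DTW (r n : ℕ) : Set ℝ :=
  {y : ℝ | ∃ k : ℤ, y = (k : ℝ) / (r : ℝ) ^ (n - 1)} ∩ Set.Icc 0 1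

/-- `g_n(x) = dist(x, D_n)`. -/
noncomputable def gTW (r n : ℕ) (x : ℝ) : ℝ := Metric.infDist x (DTW r n)

/-- `D̃_n`: midpoints of consecutive points of `D_n`. -/
def DtTW (r n : ℕ) : Set ℝ :=
  {y : ℝ | ∃ k : ℤ, y = (2 * (k : ℝ) + 1) / (2 * (r : ℝ) ^ (n - 1))} ∩ Set.Icc 0 1

/-- `D = ⋃_{n ≥ 1} D_n`. -/
def DTWall (r : ℕ) : Set ℝ := ⋃ n ≥ 1, DTW r n

/-- `D̃ = ⋃_{n ≥ 1} D̃_n`. -/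
def DtTWall (r : ℕ) : Set ℝ := ⋃ n ≥ 1, DtTW r n



noncomputable def tTW (r : ℕ) (ε : ℕ → ℕ) (p : ℕ) : ℝ :=
  ∑' i : ℕ, (ε (p + 1 + i) : ℝ) / (r : ℝ) ^ (i + 1)

lemma rinv_lt (r : ℕ) (hr : 2 ≤ r) : (1:ℝ)/(r:ℝ) < 1 := by
  rw [one_div]; exact inv_lt_one_of_one_lt₀ (by exact_mod_cast hr)

lemma geom_summable (r : ℕ) (hr : 2 ≤ r) : Summable (fun i : ℕ => ((1:ℝ)/(r:ℝ)) ^ (i+1)) := by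
  simpa [pow_succ] using (summable_geometric_of_lt_one (by positivity) (rinv_lt r hr)).mul_right (1/(r:ℝ))

lemma geom_sum (r : ℕ) (hr : 2 ≤ r) : ∑' i : ℕ, ((1:ℝ)/(r:ℝ)) ^ (i+1) = 1/((r:ℝ)-1) := by
  have h1 : (2:ℝ) ≤ r := by exact_mod_cast hr
  have h2 : ((r:ℝ)-1) ≠ 0 := by intro h; nlinarith
  have h3 : (r:ℝ) ≠ 0 := by intro h; nlinarith
  have hg := tsum_geometric_of_lt_one (r := (1:ℝ)/(r:ℝ)) (by positivity) (rinv_lt r hr)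
  calc ∑' i : ℕ, ((1:ℝ)/(r:ℝ)) ^ (i+1) = (∑' i : ℕ, ((1:ℝ)/(r:ℝ)) ^ i) * (1/(r:ℝ)) := by
        rw [← tsum_mul_right]; exact tsum_congr fun i => pow_succ _ _
    _ = (1 - 1/(r:ℝ))⁻¹ * (1/(r:ℝ)) := by rw [hg]
    _ = 1/((r:ℝ)-1) := by field_simp

lemma digit_le (r : ℕ) (ε : ℕ → ℕ) (hε : ∀ n, ε n < r) (j : ℕ) : (ε j : ℝ) ≤ (r:ℝ) - 1 := by
  have := hε j
  have : (ε j : ℝ) + 1 ≤ (r:ℝ) := by exact_mod_cast this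
  linarith

lemma tTW_summable (r : ℕ) (hr : 2 ≤ r) (ε : ℕ → ℕ) (hε : ∀ n, ε n < r) (p : ℕ) :
    Summable (fun i : ℕ => (ε (p + 1 + i) : ℝ) / (r : ℝ) ^ (i + 1)) := by
  have hr0 : (0:ℝ) < r := by positivity
  have hg : Summable (fun i : ℕ => ((r:ℝ) - 1) * ((1:ℝ)/(r:ℝ)) ^ (i+1)) :=
    (geom_summable r hr).mul_left _
  refine Summable.of_nonneg_of_le (fun i => by positivity) (fun i => ?_) hg
  rw [div_eq_mul_inv, one_div, inv_pow]
  exact mul_le_mul_of_nonneg_right (digit_le r ε hε _) (by positivity)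

lemma tTW_nonneg (r : ℕ) (ε : ℕ → ℕ) (p : ℕ) : 0 ≤ tTW r ε p :=
  tsum_nonneg (fun i => by positivity)

lemma tTW_rec (r : ℕ) (hr : 2 ≤ r) (ε : ℕ → ℕ) (hε : ∀ n, ε n < r) (p : ℕ) :
    tTW r ε p = ((ε (p+1) : ℝ) + tTW r ε (p+1)) / r := by
  have hr0 : (0:ℝ) < r := by positivity
  have hs := tTW_summable r hr ε hε p
  have h := Summable.tsum_eq_zero_add hs
  have h2 : ∑' i : ℕ, (ε (p + 1 + (i+1)) : ℝ) / (r:ℝ) ^ (i + 1 + 1)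
      = (1/(r:ℝ)) * ∑' i : ℕ, (ε (p + 1 + 1 + i) : ℝ) / (r:ℝ) ^ (i + 1) := by
    rw [← tsum_mul_left]
    refine tsum_congr fun i => ?_
    have e : p + 1 + (i+1) = p + 1 + 1 + i := by ring
    rw [e, pow_succ]
    ring
  unfold tTW
  rw [h, h2]
  have e0 : p + 1 + 0 = p + 1 := rfl
  rw [e0, pow_one]
  field_simp

lemma cOne (r : ℕ) (hr : 2 ≤ r) :
    ∑' i : ℕ, ((r:ℝ) - 1) / (r:ℝ) ^ (i+1) = 1 := by
  have h1 : (2:ℝ) ≤ r := by exact_mod_cast hr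
  have h2 : ((r:ℝ)-1) ≠ 0 := by intro h; nlinarith
  have e : ∀ i : ℕ, ((r:ℝ) - 1) / (r:ℝ) ^ (i+1) = ((r:ℝ)-1) * ((1:ℝ)/(r:ℝ))^(i+1) := by
    intro i; rw [one_div, inv_pow, div_eq_mul_inv]
  rw [tsum_congr e, tsum_mul_left, geom_sum r hr]
  field_simp

lemma cSummable (r : ℕ) (hr : 2 ≤ r) :
    Summable (fun i : ℕ => ((r:ℝ) - 1) / (r:ℝ) ^ (i+1)) := by
  have e : ∀ i : ℕ, ((r:ℝ) - 1) / (r:ℝ) ^ (i+1) = ((r:ℝ)-1) * ((1:ℝ)/(r:ℝ))^(i+1) := by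
    intro i; rw [one_div, inv_pow, div_eq_mul_inv]
  exact (funext e : _) ▸ (geom_summable r hr).mul_left _

lemma tTW_le_one (r : ℕ) (hr : 2 ≤ r) (ε : ℕ → ℕ) (hε : ∀ n, ε n < r) (p : ℕ) :
    tTW r ε p ≤ 1 := by
  have h := Summable.tsum_le_tsum (f := fun i : ℕ => (ε (p+1+i) : ℝ) / (r:ℝ)^(i+1))
    (g := fun i : ℕ => ((r:ℝ) - 1) / (r:ℝ) ^ (i+1))
    (fun i => by
      have hr0 : (0:ℝ) < r := by positivity
      show (ε (p+1+i):ℝ)/(r:ℝ)^(i+1) ≤ ((r:ℝ)-1)/(r:ℝ)^(i+1)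
      gcongr
      exact digit_le r ε hε _)
    (tTW_summable r hr ε hε p) (cSummable r hr)
  calc tTW r ε p ≤ _ := h
    _ = 1 := cOne r hr

lemma tTW_pos (r : ℕ) (hr : 2 ≤ r) (ε : ℕ → ℕ) (hε : ∀ n, ε n < r) (p : ℕ)
    (hj : ∃ j, p + 1 ≤ j ∧ ε j ≠ 0) : 0 < tTW r ε p := by
  obtain ⟨j, hj1, hj2⟩ := hj
  set i := j - (p+1) with hi
  have hji : j = p + 1 + i := by omega
  have hterm : (0:ℝ) < (ε (p+1+i) : ℝ) / (r:ℝ)^(i+1) := by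
    have hr0 : (0:ℝ) < r := by positivity
    have : 0 < ε (p+1+i) := by rw [← hji]; omega
    have : (0:ℝ) < (ε (p+1+i) : ℝ) := by exact_mod_cast this
    positivity
  have := Summable.le_tsum (tTW_summable r hr ε hε p) i (fun j _ => by positivity)
  exact lt_of_lt_of_le hterm this

lemma tTW_lt_one (r : ℕ) (hr : 2 ≤ r) (ε : ℕ → ℕ) (hε : ∀ n, ε n < r) (p : ℕ)
    (hj : ∃ j, p + 1 ≤ j ∧ ε j ≠ r - 1) : tTW r ε p < 1 := by
  obtain ⟨j, hj1, hj2⟩ := hj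
  set i := j - (p+1) with hi
  have hji : j = p + 1 + i := by omega
  have hr0 : (0:ℝ) < r := by positivity
  have hsub : Summable (fun i : ℕ => ((r:ℝ) - 1) / (r:ℝ) ^ (i+1) - (ε (p+1+i) : ℝ) / (r:ℝ)^(i+1)) :=
    (cSummable r hr).sub (tTW_summable r hr ε hε p)
  have hts : ∑' i : ℕ, (((r:ℝ) - 1) / (r:ℝ) ^ (i+1) - (ε (p+1+i) : ℝ) / (r:ℝ)^(i+1))
      = 1 - tTW r ε p := by
    rw [Summable.tsum_sub (cSummable r hr) (tTW_summable r hr ε hε p), cOne r hr]; rfl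
  have hterm : (0:ℝ) < ((r:ℝ) - 1) / (r:ℝ) ^ (i+1) - (ε (p+1+i) : ℝ) / (r:ℝ)^(i+1) := by
    have h5 : ε (p+1+i) < r - 1 := by rw [← hji]; have := hε j; omega
    have h6 : (ε (p+1+i) : ℝ) < (r:ℝ) - 1 := by
      have : (ε (p+1+i) : ℝ) + 1 < (r:ℝ) := by
        have : ε (p+1+i) + 1 < r := by omega
        exact_mod_cast this
      linarith
    have hp : (0:ℝ) < (r:ℝ)^(i+1) := by positivity
    have : (ε (p+1+i) : ℝ) / (r:ℝ)^(i+1) < ((r:ℝ)-1) / (r:ℝ)^(i+1) := by gcongr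
    linarith
  have hge := Summable.le_tsum hsub i (fun m _ => by
    have := digit_le r ε hε (p+1+m)
    have : (0:ℝ) < (r:ℝ)^(m+1) := by positivity
    apply sub_nonneg.mpr
    gcongr)

  rw [hts] at hge
  linarith


lemma ginfA (r n : ℕ) (hr : 2 ≤ r) (k : ℕ) (hk : (k:ℝ) + 1 ≤ (r:ℝ)^(n-1)) (y : ℝ)
    (hy1 : (k:ℝ)/(r:ℝ)^(n-1) < y)
    (hy2 : 2*y < (k:ℝ)/(r:ℝ)^(n-1) + ((k:ℝ)+1)/(r:ℝ)^(n-1)) :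
    Metric.infDist y (DTW r n) = y - (k:ℝ)/(r:ℝ)^(n-1) := by
  have hm : (0:ℝ) < (r:ℝ)^(n-1) := by positivity
  set m : ℝ := (r:ℝ)^(n-1) with hmdef
  have ha : (k:ℝ)/m ∈ DTW r n := by
    refine ⟨⟨(k:ℤ), by push_cast; rfl⟩, ⟨by positivity, ?_⟩⟩
    rw [div_le_one hm]; linarith
  have hub : Metric.infDist y (DTW r n) ≤ y - (k:ℝ)/m := by
    have h := Metric.infDist_le_dist_of_mem (x := y) ha
    rwa [Real.dist_eq, abs_of_pos (by linarith)] at h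
  refine le_antisymm hub (le_of_not_gt fun h => ?_)
  obtain ⟨z, hz, hd⟩ := (Metric.infDist_lt_iff ⟨_, ha⟩).1 h
  obtain ⟨⟨j, hj⟩, hz0, hz1⟩ := hz
  rw [Real.dist_eq] at hd
  have habs : |y - z| < y - (k:ℝ)/m := hd
  rcases le_or_gt (j:ℝ) (k:ℝ) with hjk | hjk
  · have hzle : z ≤ (k:ℝ)/m := by rw [hj]; gcongr
    have h1 : y - z < y - (k:ℝ)/m := lt_of_abs_lt habs
    linarith
  · have hjk2 : (k:ℤ) < j := by
      have h5 : ((k:ℤ):ℝ) < (j:ℝ) := by push_cast; exact hjk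
      exact_mod_cast h5
    have hjk' : (k:ℝ) + 1 ≤ (j:ℝ) := by
      have h3 : (k:ℤ) + 1 ≤ j := hjk2
      have h4 : ((k:ℤ):ℝ) + 1 ≤ (j:ℝ) := by exact_mod_cast h3
      simpa using h4
    have hzge : ((k:ℝ)+1)/m ≤ z := by
      rw [hj]; gcongr
    have : y - z < y - (k:ℝ)/m := lt_of_abs_lt habs
    have : z - y < y - (k:ℝ)/m := lt_of_abs_lt (abs_sub_comm y z ▸ habs)
    linarith

lemma ginfB (r n : ℕ) (hr : 2 ≤ r) (k : ℕ) (hk : (k:ℝ) + 1 ≤ (r:ℝ)^(n-1)) (y : ℝ)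
    (hy1 : y < ((k:ℝ)+1)/(r:ℝ)^(n-1))
    (hy2 : (k:ℝ)/(r:ℝ)^(n-1) + ((k:ℝ)+1)/(r:ℝ)^(n-1) < 2*y) :
    Metric.infDist y (DTW r n) = ((k:ℝ)+1)/(r:ℝ)^(n-1) - y := by
  have hm : (0:ℝ) < (r:ℝ)^(n-1) := by positivity
  set m : ℝ := (r:ℝ)^(n-1) with hmdef
  have hb : ((k:ℝ)+1)/m ∈ DTW r n := by
    refine ⟨⟨(k:ℤ)+1, by push_cast; rfl⟩, ⟨by positivity, ?_⟩⟩
    rw [div_le_one hm]; linarith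
  have hub : Metric.infDist y (DTW r n) ≤ ((k:ℝ)+1)/m - y := by
    have h := Metric.infDist_le_dist_of_mem (x := y) hb
    rwa [Real.dist_eq, abs_of_neg (by linarith), neg_sub] at h
  refine le_antisymm hub (le_of_not_gt fun h => ?_)
  obtain ⟨z, hz, hd⟩ := (Metric.infDist_lt_iff ⟨_, hb⟩).1 h
  obtain ⟨⟨j, hj⟩, hz0, hz1⟩ := hz
  rw [Real.dist_eq] at hd
  have habs : |y - z| < ((k:ℝ)+1)/m - y := hd
  rcases le_or_gt (j:ℝ) (k:ℝ) with hjk | hjk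
  · have hzle : z ≤ (k:ℝ)/m := by rw [hj]; gcongr
    have h1 : y - z < ((k:ℝ)+1)/m - y := lt_of_abs_lt habs
    linarith
  · have hjk2 : (k:ℤ) < j := by
      have h5 : ((k:ℤ):ℝ) < (j:ℝ) := by push_cast; exact hjk
      exact_mod_cast h5
    have hjk' : (k:ℝ) + 1 ≤ (j:ℝ) := by
      have h3 : (k:ℤ) + 1 ≤ j := hjk2
      have h4 : ((k:ℤ):ℝ) + 1 ≤ (j:ℝ) := by exact_mod_cast h3
      simpa using h4
    have hzge : ((k:ℝ)+1)/m ≤ z := by rw [hj]; gcongr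
    have h2 : z - y < ((k:ℝ)+1)/m - y := lt_of_abs_lt (abs_sub_comm y z ▸ habs)
    linarith

lemma derivA (r n : ℕ) (hr : 2 ≤ r) (x f : ℝ) (K : ℕ)
    (hK : (r:ℝ)^(n-1) * x = K + f) (hf0 : 0 < f) (hf : f < 1/2)
    (hK1 : (K:ℝ) + 1 ≤ (r:ℝ)^(n-1)) :
    HasDerivAt (gTW r n) 1 x := by
  have hm : (0:ℝ) < (r:ℝ)^(n-1) := by positivity
  set m : ℝ := (r:ℝ)^(n-1) with hmdef
  have hx : x = ((K:ℝ) + f)/m := by field_simp; linarith [hK]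
  have hδ : 0 < min (f/m) ((1/2 - f)/m) := lt_min (by positivity) (div_pos (by linarith) hm)
  have hev : gTW r n =ᶠ[𝓝 x] (fun y => y - (K:ℝ)/m) := by
    refine Filter.eventuallyEq_of_mem (Metric.ball_mem_nhds x hδ) (fun y hy => ?_)
    rw [Metric.mem_ball, Real.dist_eq] at hy
    have h1 : y - x < (1/2 - f)/m := lt_of_abs_lt (hy.trans_le (min_le_right _ _))
    have h2 : x - y < f/m := lt_of_abs_lt ((abs_sub_comm y x ▸ hy).trans_le (min_le_left _ _))
    rw [hx] at h1 h2
    have hy1' : (K:ℝ)/m < y := by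
      have e : ((K:ℝ)+f)/m - f/m = (K:ℝ)/m := by ring
      linarith
    have hy2' : 2*y < (K:ℝ)/m + ((K:ℝ)+1)/m := by
      have e : 2*(((K:ℝ)+f)/m + (1/2-f)/m) = (K:ℝ)/m + ((K:ℝ)+1)/m := by ring
      linarith
    exact ginfA r n hr K hK1 y hy1' hy2'
  exact ((hasDerivAt_id x).sub_const ((K:ℝ)/m)).congr_of_eventuallyEq hev

lemma derivB (r n : ℕ) (hr : 2 ≤ r) (x f : ℝ) (K : ℕ)
    (hK : (r:ℝ)^(n-1) * x = K + f) (hf0 : 1/2 < f) (hf : f < 1)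
    (hK1 : (K:ℝ) + 1 ≤ (r:ℝ)^(n-1)) :
    HasDerivAt (gTW r n) (-1) x := by
  have hm : (0:ℝ) < (r:ℝ)^(n-1) := by positivity
  set m : ℝ := (r:ℝ)^(n-1) with hmdef
  have hx : x = ((K:ℝ) + f)/m := by field_simp; linarith [hK]
  have hδ : 0 < min ((1 - f)/m) ((f - 1/2)/m) :=
    lt_min (div_pos (by linarith) hm) (div_pos (by linarith) hm)
  have hev : gTW r n =ᶠ[𝓝 x] (fun y => ((K:ℝ)+1)/m - y) := by
    refine Filter.eventuallyEq_of_mem (Metric.ball_mem_nhds x hδ) (fun y hy => ?_)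
    rw [Metric.mem_ball, Real.dist_eq] at hy
    have h1 : y - x < (1 - f)/m := lt_of_abs_lt (hy.trans_le (min_le_left _ _))
    have h2 : x - y < (f - 1/2)/m := lt_of_abs_lt ((abs_sub_comm y x ▸ hy).trans_le (min_le_right _ _))
    rw [hx] at h1 h2
    have hy1' : y < ((K:ℝ)+1)/m := by
      have e : ((K:ℝ)+f)/m + (1-f)/m = ((K:ℝ)+1)/m := by ring
      linarith
    have hy2' : (K:ℝ)/m + ((K:ℝ)+1)/m < 2*y := by
      have e : 2*(((K:ℝ)+f)/m - (f-1/2)/m) = (K:ℝ)/m + ((K:ℝ)+1)/m := by ring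
      linarith
    exact ginfB r n hr K hK1 y hy1' hy2'
  have hd : HasDerivAt (fun y : ℝ => ((K:ℝ)+1)/m - y) (-1) x := by
    simpa using (hasDerivAt_id x).const_sub (((K:ℝ)+1)/m)
  exact hd.congr_of_eventuallyEq hev

lemma tTW_pow (r : ℕ) (hr : 2 ≤ r) (ε : ℕ → ℕ) (hε : ∀ n, ε n < r) :
    ∀ p : ℕ, ∃ K : ℕ, (r:ℝ)^p * tTW r ε 0 = K + tTW r ε p := by
  intro p
  induction p with
  | zero => exact ⟨0, by simp⟩
  | succ p ih =>
    obtain ⟨K, hK⟩ := ih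
    refine ⟨r*K + ε (p+1), ?_⟩
    have hr0 : (0:ℝ) < r := by positivity
    have hrec := tTW_rec r hr ε hε p
    have : (r:ℝ) * tTW r ε p = (ε (p+1) : ℝ) + tTW r ε (p+1) := by
      rw [hrec]; field_simp
    push_cast
    rw [pow_succ]
    nlinarith [hK, this]

lemma half_step (r : ℕ) (hr : 2 ≤ r) (ε : ℕ → ℕ) (hε : ∀ n, ε n < r) (q : ℕ)
    (hpos : 0 < tTW r ε (q+1)) (hlt : tTW r ε (q+1) < 1)
    (hq : tTW r ε q = 1/2) :
    (ε (q+1) : ℝ) = ((r:ℝ) - 1)/2 ∧ tTW r ε (q+1) = 1/2 := by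
  have hr0 : (0:ℝ) < r := by positivity
  have hrec := tTW_rec r hr ε hε q
  rw [hq] at hrec
  have hsum : (ε (q+1) : ℝ) + tTW r ε (q+1) = (r:ℝ)/2 := by
    field_simp at hrec; linarith
  have h1 : 2 * ε (q+1) < r := by
    have : 2 * (ε (q+1):ℝ) < (r:ℝ) := by linarith
    exact_mod_cast this
  have h2 : r < 2 * ε (q+1) + 2 := by
    have : (r:ℝ) < 2 * (ε (q+1):ℝ) + 2 := by linarith
    exact_mod_cast this
  have h3 : r = 2 * ε (q+1) + 1 := by omega
  have h4 : (r:ℝ) = 2 * (ε (q+1):ℝ) + 1 := by exact_mod_cast h3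
  constructor
  · linarith
  · linarith

theorem stmt3 (r : ℕ) (hr : 2 ≤ r) (ε : ℕ → ℕ) (hε : ∀ n, ε n < r)
    (x : ℝ) (hxe : x = ∑' n : ℕ, (ε (n + 1) : ℝ) / (r : ℝ) ^ (n + 1))
    (h0 : ¬ ∃ n₀, ∀ n ≥ n₀, ε n = 0)
    (h1 : ¬ ∃ n₀, ∀ n ≥ n₀, ε n = r - 1)
    (h2 : ¬ ∃ n₀, ∀ n ≥ n₀, (ε n : ℝ) = ((r : ℝ) - 1) / 2) :
    ∀ n, 1 ≤ n → ∃ d : ℝ, HasDerivAt (gTW r n) d x ∧ (d = 1 ∨ d = -1) ∧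
      ((ε n : ℝ) < ((r : ℝ) - 1) / 2 → d = 1) ∧
      (((r : ℝ) - 1) / 2 < (ε n : ℝ) → d = -1) := by
  have hr0 : (0:ℝ) < r := by positivity
  push_neg at h0 h1
  have hx0 : x = tTW r ε 0 := by
    rw [hxe]; exact tsum_congr fun i => by rw [show 0 + 1 + i = i + 1 by omega]
  have tpos : ∀ p, 0 < tTW r ε p := fun p => by
    obtain ⟨j, hj1, hj2⟩ := h0 (p+1)
    exact tTW_pos r hr ε hε p ⟨j, hj1, hj2⟩
  have tlt : ∀ p, tTW r ε p < 1 := fun p => by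
    obtain ⟨j, hj1, hj2⟩ := h1 (p+1)
    exact tTW_lt_one r hr ε hε p ⟨j, hj1, hj2⟩
  intro n hn
  obtain ⟨K, hK⟩ := tTW_pow r hr ε hε (n-1)
  rw [← hx0] at hK
  -- hK : (r:ℝ)^(n-1) * x = K + tTW r ε (n-1)
  have hKlt : (K:ℝ) < (r:ℝ)^(n-1) := by
    have hx1 : x ≤ 1 := by rw [hx0]; exact (tTW_le_one r hr ε hε 0).trans_eq rfl
    nlinarith [tpos (n-1), pow_pos hr0 (n-1), hK]
  have hK1 : (K:ℝ) + 1 ≤ (r:ℝ)^(n-1) := by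
    have h5 : (K:ℝ) < ((r^(n-1) : ℕ) : ℝ) := by push_cast; exact hKlt
    have h6 : K < r^(n-1) := by exact_mod_cast h5
    have h7 : K + 1 ≤ r^(n-1) := h6
    have h8 : ((K+1:ℕ):ℝ) ≤ ((r^(n-1):ℕ):ℝ) := by exact_mod_cast h7
    push_cast at h8; linarith
  have hrec : tTW r ε (n-1) = ((ε n : ℝ) + tTW r ε n) / r := by
    have := tTW_rec r hr ε hε (n-1)
    rwa [show n - 1 + 1 = n by omega] at this
  have hmul : tTW r ε (n-1) * r = (ε n : ℝ) + tTW r ε n := by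
    rw [hrec]; field_simp
  rcases lt_trichotomy ((ε n : ℝ)) (((r:ℝ) - 1)/2) with hc | hc | hc
  · -- t(n-1) < 1/2
    have hd2 : 2 * ε n + 2 ≤ r := by
      have : 2 * (ε n : ℝ) + 1 < (r:ℝ) := by linarith
      have : 2 * ε n + 1 < r := by exact_mod_cast this
      omega
    have hd2' : 2 * ((ε n:ℝ) + 1) ≤ (r:ℝ) := by
      have : ((2 * ε n + 2 : ℕ) : ℝ) ≤ ((r:ℕ):ℝ) := by exact_mod_cast hd2
      push_cast at this; linarith
    have hhalf : tTW r ε (n-1) < 1/2 := by nlinarith [tlt n, hmul]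
    exact ⟨1, derivA r n hr x _ K hK (tpos (n-1)) hhalf hK1, Or.inl rfl,
      fun _ => rfl, fun h => absurd h (by linarith)⟩
  · -- eq case
    have hne : tTW r ε (n-1) ≠ 1/2 := by
      intro habs
      have htn : tTW r ε n = 1/2 := by
        rw [habs] at hmul; rw [hc] at hmul; linarith
      have key : ∀ j : ℕ, tTW r ε (n + j) = 1/2 := by
        intro j
        induction j with
        | zero => rw [Nat.add_zero]; exact htn
        | succ j ih =>
          have h9 := half_step r hr ε hε (n+j) (tpos _) (tlt _) ih
          rw [show n + (j+1) = (n+j)+1 by omega]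
          exact h9.2
      refine h2 ⟨n, fun j hj => ?_⟩
      rcases Nat.eq_or_lt_of_le hj with he | hlt2
      · rw [← he]; exact hc
      · have hj1 : j = (n + (j - n - 1)) + 1 := by omega
        have := half_step r hr ε hε (n + (j - n - 1)) (tpos _) (tlt _) (key _)
        rw [hj1]; exact this.1
    rcases hne.lt_or_gt with hlt2 | hgt2
    · exact ⟨1, derivA r n hr x _ K hK (tpos (n-1)) hlt2 hK1, Or.inl rfl,
        fun _ => rfl, fun h => absurd h (by rw [hc]; exact lt_irrefl _)⟩
    · exact ⟨-1, derivB r n hr x _ K hK hgt2 (tlt (n-1)) hK1, Or.inr rfl,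
        fun h => absurd h (by rw [hc]; exact lt_irrefl _), fun _ => rfl⟩
  · -- t(n-1) > 1/2
    have hd2 : r ≤ 2 * ε n := by
      have : (r:ℝ) < 2 * (ε n : ℝ) + 1 := by linarith
      have : r < 2 * ε n + 1 := by exact_mod_cast this
      omega
    have hd2' : (r:ℝ) ≤ 2 * (ε n:ℝ) := by exact_mod_cast hd2
    have hhalf : 1/2 < tTW r ε (n-1) := by nlinarith [tpos n, hmul]
    exact ⟨-1, derivB r n hr x _ K hK hhalf (tlt (n-1)) hK1, Or.inr rfl,
      fun h => absurd h (by linarith), fun _ => rfl⟩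
end

section
/- The sets A⁺ = { x ∈ [0,1] : Σ_{n=1}^∞ g'_n(x) = +∞ } and A⁻ = { x ∈ [0,1] : Σ_{n=1}^∞ g'_n(x) = -∞ } both have Lebesgue measure zero. -/
open Set Filter MeasureTheory Metric Topology

/-- round minimizes distance to integers -/
lemma round_min (t : ℝ) (k : ℤ) : |t - round t| ≤ |t - k| := by
  rcases eq_or_ne k (round t) with rfl | hk
  · rfl
  · have h1 : (1 : ℝ) ≤ |((round t - k : ℤ) : ℝ)| := by
      rw [← Int.cast_abs]
      exact_mod_cast Int.one_le_abs (by omega)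
    have h2 := abs_sub_round t
    have h3 : |((round t - k : ℤ) : ℝ)| ≤ |t - round t| + |t - k| := by
      push_cast
      calc |((round t : ℝ) - k)| = |(t - k) - (t - round t)| := by ring_nf
        _ ≤ |t - k| + |t - round t| := abs_sub _ _
        _ = |t - round t| + |t - k| := by ring
    linarith

lemma phiTW_eq (t : ℝ) : phiTW t = |t - round t| := by
  apply le_antisymm
  · have : ((round t : ℝ)) ∈ Set.range (Int.cast : ℤ → ℝ) := ⟨round t, rfl⟩
    simpa [phiTW, Real.dist_eq] using Metric.infDist_le_dist_of_mem this
  · rw [phiTW, Metric.infDist_eq_iInf]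
    haveI : Nonempty ↥(Set.range (Int.cast : ℤ → ℝ)) := ⟨⟨(0:ℝ), ⟨0, by norm_num⟩⟩⟩
    apply le_ciInf
    rintro ⟨z, k, rfl⟩
    simpa [Real.dist_eq] using round_min t k

lemma phiTW_le (t : ℝ) (k : ℤ) : phiTW t ≤ |t - k| := by
  rw [phiTW_eq]; exact round_min t k

lemma phiTW_add_int (t : ℝ) (m : ℤ) : phiTW (t + m) = phiTW t := by
  rw [phiTW_eq, phiTW_eq, round_add_intCast]
  push_cast
  ring_nf

lemma phiTW_neg (t : ℝ) : phiTW (-t) = phiTW t := by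
  have key : ∀ s : ℝ, phiTW (-s) ≤ phiTW s := by
    intro s
    calc phiTW (-s) ≤ |(-s) - ((-round s : ℤ) : ℝ)| := phiTW_le _ _
      _ = |s - round s| := by push_cast; rw [← abs_neg]; ring_nf
      _ = phiTW s := (phiTW_eq s).symm
  refine le_antisymm (key t) ?_
  simpa using key (-t)

lemma round_near (y : ℝ) (m : ℤ) (h : |y - m| < 1/2) : round y = m := by
  have h1 := abs_sub_round y
  have h2 : |((round y - m : ℤ) : ℝ)| < 1 := by
    push_cast
    calc |((round y : ℝ) - m)| = |(y - m) - (y - round y)| := by ring_nf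
      _ ≤ |y - m| + |y - round y| := abs_sub _ _
      _ < 1 := by rw [abs_sub_comm y (round y)] at h1 ⊢; linarith [abs_sub_comm ((round y : ℝ)) y]
  have h3 : |round y - m| < 1 := by
    exact_mod_cast (by rwa [← Int.cast_abs] at h2 : ((|round y - m| : ℤ) : ℝ) < 1)
  rw [abs_lt] at h3
  omega

lemma phiTW_near (y : ℝ) (m : ℤ) (h : |y - m| < 1/2) : phiTW y = |y - m| := by
  rw [phiTW_eq, round_near y m h]

lemma not_diff_abs_sub (c : ℝ) : ¬ DifferentiableAt ℝ (fun y => |y - c|) c := by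
  intro h2
  have h4 : DifferentiableAt ℝ ((fun y => |y - c|) ∘ fun y : ℝ => y + c) 0 :=
    DifferentiableAt.comp 0 (by simpa using h2) (differentiableAt_id.add_const c)
  have h5 : ((fun y => |y - c|) ∘ fun y : ℝ => y + c) = (abs : ℝ → ℝ) := by
    funext y; simp [Function.comp]
  rw [h5] at h4
  exact not_differentiableAt_abs_zero h4

lemma phiTW_eventuallyEq_int (m : ℤ) : phiTW =ᶠ[𝓝 (m : ℝ)] fun y => |y - m| := by
  filter_upwards [Metric.ball_mem_nhds (m : ℝ) (by norm_num : (0:ℝ) < 1/2)] with y hy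
  exact phiTW_near y m (by simpa [Real.dist_eq] using hy)

lemma phiTW_not_diff_int (m : ℤ) : ¬ DifferentiableAt ℝ phiTW (m : ℝ) := by
  intro h
  exact not_diff_abs_sub (m:ℝ)
    (h.congr_of_eventuallyEq (phiTW_eventuallyEq_int m).symm)

lemma phiTW_eventuallyEq_half (m : ℤ) :
    phiTW =ᶠ[𝓝 ((m : ℝ) + 1/2)] fun y => 1/2 - |y - ((m:ℝ) + 1/2)| := by
  set x : ℝ := (m : ℝ) + 1/2 with hx
  filter_upwards [Metric.ball_mem_nhds x (by norm_num : (0:ℝ) < 1/2)] with y hy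
  have hy' : |y - x| < 1/2 := by simpa [Real.dist_eq] using hy
  rw [abs_lt] at hy'
  rcases lt_trichotomy y x with h | h | h
  · have h1 : |y - (m:ℝ)| < 1/2 := by
      rw [abs_lt]; constructor <;> (simp only [hx] at *; linarith)
    rw [phiTW_near y m h1, abs_of_pos (by simp only [hx] at *; linarith),
      abs_of_neg (by linarith)]
    simp only [hx]; ring
  · subst h
    rw [phiTW_eq]
    have hr : round x = m + 1 := by
      rw [hx, add_comm, round_add_intCast]
      norm_num [round_eq]
      omega
    rw [hr]
    push_cast
    rw [hx]
    norm_num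
  · have h1 : |y - ((m:ℝ) + 1)| < 1/2 := by
      rw [abs_lt]; constructor <;> (simp only [hx] at *; linarith)
    have h2 := phiTW_near y (m + 1) (by push_cast; exact h1)
    push_cast at h2
    rw [h2, abs_of_neg (by simp only [hx] at *; linarith),
      abs_of_pos (by linarith)]
    simp only [hx]; ring

lemma phiTW_not_diff_half (m : ℤ) : ¬ DifferentiableAt ℝ phiTW ((m : ℝ) + 1/2) := by
  intro h
  set x : ℝ := (m : ℝ) + 1/2
  have h2 : DifferentiableAt ℝ (fun y => 1/2 - |y - x|) x :=
    h.congr_of_eventuallyEq (phiTW_eventuallyEq_half m).symm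
  have h2' : DifferentiableAt ℝ (fun y => |y - x|) x := by
    have := h2.const_sub (1/2)
    simpa using this
  exact not_diff_abs_sub x h2'

lemma phiTW_diff (x : ℝ) (h : ∀ m : ℤ, 2 * x ≠ (m : ℝ)) : DifferentiableAt ℝ phiTW x := by
  set m := round x with hm
  have habs : |x - m| ≤ 1/2 := abs_sub_round x
  have hne0 : x ≠ (m : ℝ) := by
    intro he; exact h (2 * m) (by push_cast; linarith [he])
  have hnehalf : |x - m| < 1/2 := by
    rcases lt_or_eq_of_le habs with h' | h'
    · exact h'
    · exfalso
      rcases abs_eq (by norm_num : (0:ℝ) ≤ 1/2) |>.mp h' with h'' | h''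
      · exact h (2 * m + 1) (by push_cast; linarith)
      · exact h (2 * m - 1) (by push_cast; linarith)
  rw [abs_lt] at hnehalf
  rcases lt_or_gt_of_ne hne0 with hlt | hgt
  · have hd : (0:ℝ) < min ((m:ℝ) - x) (1/2 - ((m:ℝ) - x)) :=
      lt_min (by linarith) (by linarith)
    have ev : phiTW =ᶠ[𝓝 x] fun y => (m:ℝ) - y := by
      filter_upwards [Metric.ball_mem_nhds x hd] with y hy
      have hy' : |y - x| < min ((m:ℝ) - x) (1/2 - ((m:ℝ) - x)) := by
        simpa [Real.dist_eq] using hy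
      rw [lt_min_iff] at hy'
      obtain ⟨ha, hb⟩ := hy'
      rw [abs_lt] at ha hb
      have h1 : |y - (m:ℝ)| < 1/2 := by rw [abs_lt]; constructor <;> linarith
      rw [phiTW_near y m h1, abs_of_neg (by linarith)]
      ring
    exact ((differentiable_const (m:ℝ)).sub differentiable_id).differentiableAt.congr_of_eventuallyEq ev
  · have hd : (0:ℝ) < min (x - (m:ℝ)) (1/2 - (x - (m:ℝ))) :=
      lt_min (by linarith) (by linarith)
    have ev : phiTW =ᶠ[𝓝 x] fun y => y - (m:ℝ) := by
      filter_upwards [Metric.ball_mem_nhds x hd] with y hy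
      have hy' : |y - x| < min (x - (m:ℝ)) (1/2 - (x - (m:ℝ))) := by
        simpa [Real.dist_eq] using hy
      rw [lt_min_iff] at hy'
      obtain ⟨ha, hb⟩ := hy'
      rw [abs_lt] at ha hb
      have h1 : |y - (m:ℝ)| < 1/2 := by rw [abs_lt]; constructor <;> linarith
      rw [phiTW_near y m h1, abs_of_pos (by linarith)]
    exact (differentiable_id.sub (differentiable_const (m:ℝ))).differentiableAt.congr_of_eventuallyEq ev

lemma phiTW_diff_iff (x : ℝ) : DifferentiableAt ℝ phiTW x ↔ ∀ m : ℤ, 2 * x ≠ (m : ℝ) := by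
  constructor
  · intro hdiff m hm
    rcases Int.even_or_odd m with ⟨k, hk⟩ | ⟨k, hk⟩
    · have : x = (k : ℝ) := by subst hk; push_cast at hm; linarith
      rw [this] at hdiff; exact phiTW_not_diff_int k hdiff
    · have : x = (k : ℝ) + 1/2 := by subst hk; push_cast at hm; linarith
      rw [this] at hdiff; exact phiTW_not_diff_half k hdiff
  · exact phiTW_diff x

noncomputable def psiTW (r n : ℕ) (y : ℝ) : ℝ := phiTW ((r:ℝ)^(n-1) * y)

def GsetTW (r : ℕ) (l : Filter ℝ) : Set ℝ :=
  {x | (∀ n, 1 ≤ n → DifferentiableAt ℝ (psiTW r n) x) ∧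
    Tendsto (fun N => ∑ k ∈ Finset.Icc 1 N, deriv (psiTW r k) x / (r:ℝ)^(k-1)) atTop l}

lemma psiTW_one (r : ℕ) : psiTW r 1 = phiTW := by
  funext y; simp [psiTW]

lemma psiTW_succ (r n : ℕ) (hn : 1 ≤ n) :
    psiTW r (n+1) = fun y => psiTW r n ((r:ℝ) * y) := by
  funext y
  simp only [psiTW, Nat.add_sub_cancel]
  congr 1
  rw [← mul_assoc, mul_comm ((r:ℝ)^(n-1)) (r:ℝ), ← pow_succ']
  congr 2
  omega

lemma psiTW_add_int (r n : ℕ) (y : ℝ) (k : ℤ) : psiTW r n (y + k) = psiTW r n y := by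
  simp only [psiTW, mul_add]
  have : (r:ℝ)^(n-1) * (k:ℝ) = (((r^(n-1) : ℕ) : ℤ) * k : ℤ) := by push_cast; ring
  rw [this, phiTW_add_int]

/-- transfer of `HasDerivAt` up one level -/
lemma psi_hasDeriv_up {r n : ℕ} (hn : 1 ≤ n) {d x : ℝ}
    (h : HasDerivAt (psiTW r n) d ((r:ℝ) * x)) :
    HasDerivAt (psiTW r (n+1)) (d * r) x := by
  have hf : HasDerivAt (fun y : ℝ => (r:ℝ) * y) ((r:ℝ)) x := by
    simpa using (hasDerivAt_id x).const_mul (r:ℝ)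
  have h2 := HasDerivAt.comp x h hf
  rw [psiTW_succ r n hn]
  exact h2

/-- transfer of `HasDerivAt` down one level -/
lemma psi_hasDeriv_down {r n : ℕ} (hr0 : (r:ℝ) ≠ 0) (hn : 1 ≤ n) {d x : ℝ}
    (h : HasDerivAt (psiTW r (n+1)) d x) :
    HasDerivAt (psiTW r n) (d * (1/r)) ((r:ℝ) * x) := by
  have hf : HasDerivAt (fun y : ℝ => y / (r:ℝ)) (1/(r:ℝ)) ((r:ℝ) * x) := by
    simpa using (hasDerivAt_id ((r:ℝ)*x)).div_const (r:ℝ)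
  have hx : ((r:ℝ) * x) / (r:ℝ) = x := by field_simp
  have h' : HasDerivAt (psiTW r (n+1)) d (((r:ℝ) * x) / (r:ℝ)) := by rwa [hx]
  have h2 := HasDerivAt.comp ((r:ℝ)*x) h' hf
  have h3 : (psiTW r (n+1) ∘ fun y : ℝ => y / (r:ℝ)) = psiTW r n := by
    funext z
    rw [psiTW_succ r n hn]
    simp only [Function.comp]
    rw [mul_div_cancel₀ _ hr0]
  rwa [h3] at h2

lemma psi_diff_succ_iff {r n : ℕ} (hr0 : (r:ℝ) ≠ 0) (hn : 1 ≤ n) (x : ℝ) :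
    DifferentiableAt ℝ (psiTW r (n+1)) x ↔ DifferentiableAt ℝ (psiTW r n) ((r:ℝ)*x) := by
  constructor
  · intro h; exact (psi_hasDeriv_down hr0 hn h.hasDerivAt).differentiableAt
  · intro h; exact (psi_hasDeriv_up hn h.hasDerivAt).differentiableAt

lemma deriv_psi_succ {r n : ℕ} (hr0 : (r:ℝ) ≠ 0) (hn : 1 ≤ n) (x : ℝ) :
    deriv (psiTW r (n+1)) x = r * deriv (psiTW r n) ((r:ℝ)*x) := by
  by_cases hd : DifferentiableAt ℝ (psiTW r n) ((r:ℝ)*x)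
  · rw [(psi_hasDeriv_up hn hd.hasDerivAt).deriv]; ring
  · have hd2 : ¬ DifferentiableAt ℝ (psiTW r (n+1)) x := by
      intro h; exact hd ((psi_hasDeriv_down hr0 hn h.hasDerivAt).differentiableAt)
    rw [deriv_zero_of_not_differentiableAt hd, deriv_zero_of_not_differentiableAt hd2]
    ring

/-- the weighted derivative shifts under multiplication by `r` -/
lemma cTW_succ {r k : ℕ} (hr0 : (r:ℝ) ≠ 0) (hk : 1 ≤ k) (x : ℝ) :
    deriv (psiTW r (k+1)) x / (r:ℝ)^((k+1)-1) = deriv (psiTW r k) ((r:ℝ)*x) / (r:ℝ)^(k-1) := by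
  rw [deriv_psi_succ hr0 hk x]
  rw [Nat.add_sub_cancel]
  have hk' : k = (k-1) + 1 := by omega
  rw [hk', pow_succ]
  field_simp
  rw [Nat.add_sub_cancel]

lemma sum_shift {r : ℕ} (hr0 : (r:ℝ) ≠ 0) (x : ℝ) (N : ℕ) :
    ∑ k ∈ Finset.Icc 1 (N+1), deriv (psiTW r k) x / (r:ℝ)^(k-1) =
      deriv (psiTW r 1) x / (r:ℝ)^(1-1) +
        ∑ k ∈ Finset.Icc 1 N, deriv (psiTW r k) ((r:ℝ)*x) / (r:ℝ)^(k-1) := by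
  have h1 : Finset.Icc 1 (N+1) = insert 1 (Finset.Icc 2 (N+1)) := by
    ext a; simp [Finset.mem_Icc, Finset.mem_insert]; omega
  rw [h1, Finset.sum_insert (by simp [Finset.mem_Icc])]
  congr 1
  have h2 : Finset.Icc 2 (N+1) = (Finset.Icc 1 N).map (addRightEmbedding 1) := by
    rw [Finset.map_add_right_Icc]
  rw [h2, Finset.sum_map]
  apply Finset.sum_congr rfl
  intro k hk
  simp only [addRightEmbedding_apply]
  exact cTW_succ hr0 (by simp [Finset.mem_Icc] at hk; omega) x

lemma tendsto_add_const_iff_atTop (u : ℕ → ℝ) (c : ℝ) :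
    Tendsto (fun N => u N + c) atTop atTop ↔ Tendsto u atTop atTop :=
  ⟨fun h => by simpa using tendsto_atTop_add_const_right atTop (-c) h,
   fun h => tendsto_atTop_add_const_right atTop c h⟩

lemma tendsto_add_const_iff_atBot (u : ℕ → ℝ) (c : ℝ) :
    Tendsto (fun N => u N + c) atTop atBot ↔ Tendsto u atTop atBot :=
  ⟨fun h => by simpa using tendsto_atBot_add_const_right atTop (-c) h,
   fun h => tendsto_atBot_add_const_right atTop c h⟩

lemma Gset_mul_iff {r : ℕ} (hr : 2 ≤ r) {l : Filter ℝ}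
    (hl : ∀ (u : ℕ → ℝ) (c : ℝ), Tendsto (fun N => u N + c) atTop l ↔ Tendsto u atTop l)
    (x : ℝ) : (r:ℝ) * x ∈ GsetTW r l ↔ x ∈ GsetTW r l := by
  have hr0 : (r:ℝ) ≠ 0 := by positivity
  constructor
  · rintro ⟨hdiff, htend⟩
    have hphix : DifferentiableAt ℝ phiTW x := by
      rw [phiTW_diff_iff]
      intro m hm
      have h1 : DifferentiableAt ℝ phiTW ((r:ℝ)*x) := by
        have := hdiff 1 le_rfl; rwa [psiTW_one] at this
      rw [phiTW_diff_iff] at h1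
      exact h1 ((r:ℤ) * m) (by push_cast; rw [← hm]; ring)
    have hdiff' : ∀ n, 1 ≤ n → DifferentiableAt ℝ (psiTW r n) x := by
      intro n hn
      rcases Nat.exists_eq_add_of_le hn with ⟨m, rfl⟩
      rcases Nat.eq_zero_or_pos m with rfl | hm
      · rw [psiTW_one]; exact hphix
      · have := hdiff m (by omega)
        rw [add_comm 1 m]
        exact (psi_diff_succ_iff hr0 (by omega) x).mpr (hdiff m (by omega))
    refine ⟨hdiff', ?_⟩
    have key : ∀ N, ∑ k ∈ Finset.Icc 1 (N+1), deriv (psiTW r k) x / (r:ℝ)^(k-1) =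
        (∑ k ∈ Finset.Icc 1 N, deriv (psiTW r k) ((r:ℝ)*x) / (r:ℝ)^(k-1)) +
          deriv (psiTW r 1) x / (r:ℝ)^(1-1) := by
      intro N; rw [sum_shift hr0 x N]; ring
    have h2 : Tendsto (fun N => ∑ k ∈ Finset.Icc 1 (N+1),
        deriv (psiTW r k) x / (r:ℝ)^(k-1)) atTop l := by
      simp_rw [key]
      exact (hl _ _).mpr htend
    exact (tendsto_add_atTop_iff_nat 1).mp h2
  · rintro ⟨hdiff, htend⟩
    have hdiff' : ∀ n, 1 ≤ n → DifferentiableAt ℝ (psiTW r n) ((r:ℝ)*x) := by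
      intro n hn
      exact (psi_diff_succ_iff hr0 hn x).mp (hdiff (n+1) (by omega))
    refine ⟨hdiff', ?_⟩
    have key : ∀ N, ∑ k ∈ Finset.Icc 1 N, deriv (psiTW r k) ((r:ℝ)*x) / (r:ℝ)^(k-1) =
        (∑ k ∈ Finset.Icc 1 (N+1), deriv (psiTW r k) x / (r:ℝ)^(k-1)) +
          (- (deriv (psiTW r 1) x / (r:ℝ)^(1-1))) := by
      intro N; rw [sum_shift hr0 x N]; ring
    simp_rw [key]
    rw [hl]
    exact (tendsto_add_atTop_iff_nat 1).mpr htend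

lemma Gset_add_int {r : ℕ} {l : Filter ℝ} (k : ℤ) (x : ℝ) :
    x + (k:ℝ) ∈ GsetTW r l ↔ x ∈ GsetTW r l := by
  have htrans : ∀ (k : ℤ) (n : ℕ) (d z : ℝ), HasDerivAt (psiTW r n) d (z + (k:ℝ)) →
      HasDerivAt (psiTW r n) d z := by
    intro k n d z h
    have hf : HasDerivAt (fun y : ℝ => y + (k:ℝ)) 1 z := (hasDerivAt_id z).add_const _
    have h2 := HasDerivAt.comp z h hf
    have h3 : (psiTW r n ∘ fun y : ℝ => y + (k:ℝ)) = psiTW r n := by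
      funext y; simp [Function.comp, psiTW_add_int]
    rw [h3] at h2
    simpa using h2
  have hdiff_iff : ∀ (n : ℕ) (z : ℝ), DifferentiableAt ℝ (psiTW r n) (z + (k:ℝ)) ↔
      DifferentiableAt ℝ (psiTW r n) z := by
    intro n z
    constructor
    · intro h; exact (htrans k n _ z h.hasDerivAt).differentiableAt
    · intro h
      have h2 : HasDerivAt (psiTW r n) (deriv (psiTW r n) z) ((z + (k:ℝ)) + ((-k : ℤ):ℝ)) := by
        rw [Int.cast_neg, add_neg_cancel_right]; exact h.hasDerivAt
      exact (htrans (-k) n _ (z + (k:ℝ)) h2).differentiableAt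
  have hderiv : ∀ (n : ℕ) (z : ℝ), deriv (psiTW r n) (z + (k:ℝ)) = deriv (psiTW r n) z := by
    intro n z
    by_cases h : DifferentiableAt ℝ (psiTW r n) (z + (k:ℝ))
    · exact ((htrans k n _ z h.hasDerivAt).deriv).symm ▸ rfl
    · rw [deriv_zero_of_not_differentiableAt h,
        deriv_zero_of_not_differentiableAt (fun h' => h ((hdiff_iff n z).mpr h'))]
  constructor
  · rintro ⟨hd, ht⟩
    refine ⟨fun n hn => (hdiff_iff n x).mp (hd n hn), ?_⟩
    have : ∀ N, ∑ j ∈ Finset.Icc 1 N, deriv (psiTW r j) x / (r:ℝ)^(j-1) =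
        ∑ j ∈ Finset.Icc 1 N, deriv (psiTW r j) (x + (k:ℝ)) / (r:ℝ)^(j-1) :=
      fun N => Finset.sum_congr rfl fun j _ => by rw [hderiv]
    simp_rw [this]; exact ht
  · rintro ⟨hd, ht⟩
    refine ⟨fun n hn => (hdiff_iff n x).mpr (hd n hn), ?_⟩
    have : ∀ N, ∑ j ∈ Finset.Icc 1 N, deriv (psiTW r j) (x + (k:ℝ)) / (r:ℝ)^(j-1) =
        ∑ j ∈ Finset.Icc 1 N, deriv (psiTW r j) x / (r:ℝ)^(j-1) :=
      fun N => Finset.sum_congr rfl fun j _ => by rw [hderiv]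
    simp_rw [this]; exact ht

lemma DTW_zero_mem (r n : ℕ) : (0:ℝ) ∈ DTW r n :=
  ⟨⟨0, by simp⟩, by norm_num⟩

lemma gTW_eq {r : ℕ} (hr : 2 ≤ r) {n : ℕ} (hn : 1 ≤ n) {y : ℝ} (hy : y ∈ Set.Icc (0:ℝ) 1) :
    gTW r n y = psiTW r n y / (r:ℝ)^(n-1) := by
  obtain ⟨hy0, hy1⟩ := hy
  have hRpos : (0:ℝ) < (r:ℝ)^(n-1) := by positivity
  set R : ℝ := (r:ℝ)^(n-1) with hR
  set k₀ : ℤ := round (R * y) with hk₀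
  have hk0_nonneg : 0 ≤ k₀ := by
    rw [hk₀, round_eq]
    exact Int.floor_nonneg.mpr (by positivity)
  have hk0_le : (k₀ : ℝ) ≤ R := by
    have h1 : k₀ ≤ ⌊R + 1/2⌋ := by
      rw [hk₀, round_eq]
      exact Int.floor_le_floor (by nlinarith)
    have h2 : ⌊R + 1/2⌋ = ((r^(n-1) : ℕ) : ℤ) := by
      have h3 : R = (((r^(n-1) : ℕ) : ℤ) : ℝ) := by push_cast; rfl
      rw [h3, add_comm, Int.floor_add_intCast]
      norm_num
    rw [h2] at h1
    calc (k₀ : ℝ) ≤ (((r^(n-1) : ℕ) : ℤ) : ℝ) := by exact_mod_cast h1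
      _ = R := by push_cast; rfl
  have hp_mem : (k₀ : ℝ) / R ∈ DTW r n :=
    ⟨⟨k₀, rfl⟩, ⟨div_nonneg (by exact_mod_cast hk0_nonneg) hRpos.le,
      (div_le_one hRpos).mpr hk0_le⟩⟩
  have hdist : dist y ((k₀:ℝ)/R) = |R * y - k₀| / R := by
    rw [Real.dist_eq, show y - (k₀:ℝ)/R = (R * y - k₀)/R by field_simp, abs_div,
      abs_of_pos hRpos]
  have hub : gTW r n y ≤ |R * y - k₀| / R := by
    rw [← hdist]; exact Metric.infDist_le_dist_of_mem hp_mem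
  have hlb : |R * y - k₀| / R ≤ gTW r n y := by
    rw [gTW, Metric.infDist_eq_iInf]
    haveI : Nonempty ↥(DTW r n) := ⟨⟨0, DTW_zero_mem r n⟩⟩
    apply le_ciInf
    rintro ⟨z, ⟨k, rfl⟩, hz⟩
    rw [Real.dist_eq, show y - (k:ℝ)/R = (R * y - k)/R by field_simp, abs_div,
      abs_of_pos hRpos]
    rw [div_le_div_iff_of_pos_right hRpos, hk₀]
    exact round_min (R * y) k
  have : gTW r n y = |R * y - k₀| / R := le_antisymm hub hlb
  rw [this, psiTW, ← hR, phiTW_eq, hk₀]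

lemma gTW_eventuallyEq {r : ℕ} (hr : 2 ≤ r) {n : ℕ} (hn : 1 ≤ n) {x : ℝ}
    (hx : x ∈ Set.Ioo (0:ℝ) 1) :
    gTW r n =ᶠ[𝓝 x] fun y => psiTW r n y / (r:ℝ)^(n-1) := by
  filter_upwards [isOpen_Ioo.mem_nhds hx] with y hy
  exact gTW_eq hr hn (Ioo_subset_Icc_self hy)

lemma int_mem_Icc01 {k : ℤ} (h0 : (0:ℝ) ≤ (k:ℝ)) (h1 : (k:ℝ) ≤ 1) : k = 0 ∨ k = 1 := by
  have : (0:ℤ) ≤ k := by exact_mod_cast h0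
  have : k ≤ 1 := by exact_mod_cast h1
  omega

lemma gTW_one_near_zero {r : ℕ} (hr : 2 ≤ r) : gTW r 1 =ᶠ[𝓝 0] fun y => |y| := by
  filter_upwards [Metric.ball_mem_nhds (0:ℝ) (by norm_num : (0:ℝ) < 1/2)] with y hy
  have hy' : |y| < 1/2 := by simpa [Real.dist_eq] using hy
  apply le_antisymm
  · simpa [gTW, Real.dist_eq] using Metric.infDist_le_dist_of_mem (DTW_zero_mem r 1)
  · rw [gTW, Metric.infDist_eq_iInf]
    haveI : Nonempty ↥(DTW r 1) := ⟨⟨0, DTW_zero_mem r 1⟩⟩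
    apply le_ciInf
    rintro ⟨z, ⟨k, rfl⟩, hz0, hz1⟩
    simp only [Nat.sub_self, pow_zero, div_one] at hz0 hz1 ⊢
    rcases int_mem_Icc01 hz0 hz1 with rfl | rfl
    · simp [Real.dist_eq]
    · rw [Real.dist_eq]
      have h1 : 1 - |y| ≤ |y - ((1:ℤ):ℝ)| := by
        push_cast
        have := abs_sub_abs_le_abs_sub (1:ℝ) y
        rw [abs_sub_comm] at this
        simpa using this
      push_cast at h1 ⊢
      linarith

lemma gTW_one_near_one {r : ℕ} (hr : 2 ≤ r) : gTW r 1 =ᶠ[𝓝 1] fun y => |y - 1| := by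
  filter_upwards [Metric.ball_mem_nhds (1:ℝ) (by norm_num : (0:ℝ) < 1/2)] with y hy
  have hy' : |y - 1| < 1/2 := by simpa [Real.dist_eq] using hy
  have h1_mem : (1:ℝ) ∈ DTW r 1 := ⟨⟨1, by simp⟩, by norm_num⟩
  apply le_antisymm
  · simpa [gTW, Real.dist_eq] using Metric.infDist_le_dist_of_mem h1_mem
  · rw [gTW, Metric.infDist_eq_iInf]
    haveI : Nonempty ↥(DTW r 1) := ⟨⟨0, DTW_zero_mem r 1⟩⟩
    apply le_ciInf
    rintro ⟨z, ⟨k, rfl⟩, hz0, hz1⟩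
    simp only [Nat.sub_self, pow_zero, div_one] at hz0 hz1 ⊢
    rcases int_mem_Icc01 hz0 hz1 with rfl | rfl
    · rw [Real.dist_eq]
      have h1 : 1 - |y - 1| ≤ |y - ((0:ℤ):ℝ)| := by
        have h2 : |y - (y - 1)| ≤ |y| + |y - 1| := abs_sub _ _
        simp only [sub_sub_cancel, abs_one] at h2
        simp only [Int.cast_zero, sub_zero]
        linarith
      push_cast at h1 ⊢
      linarith
    · simp [Real.dist_eq]

lemma zero_notmem_Gset {r : ℕ} {l : Filter ℝ} : (0:ℝ) ∉ GsetTW r l := by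
  rintro ⟨hd, -⟩
  have h1 := hd 1 le_rfl
  rw [psiTW_one] at h1
  rw [phiTW_diff_iff] at h1
  exact h1 0 (by norm_num)

lemma one_notmem_Gset {r : ℕ} {l : Filter ℝ} : (1:ℝ) ∉ GsetTW r l := by
  rintro ⟨hd, -⟩
  have h1 := hd 1 le_rfl
  rw [psiTW_one] at h1
  rw [phiTW_diff_iff] at h1
  exact h1 2 (by norm_num)

lemma E_eq {r : ℕ} (hr : 2 ≤ r) (l : Filter ℝ) :
    {x : ℝ | x ∈ Set.Icc (0:ℝ) 1 ∧ ∃ s : ℕ → ℝ,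
      (∀ n, 1 ≤ n → HasDerivAt (gTW r n) (s n) x) ∧
      Tendsto (fun N => ∑ k ∈ Finset.Icc 1 N, s k) atTop l} =
    Set.Icc (0:ℝ) 1 ∩ GsetTW r l := by
  ext x
  simp only [Set.mem_setOf_eq, Set.mem_inter_iff]
  constructor
  · rintro ⟨hx, s, hds, hT⟩
    refine ⟨hx, ?_⟩
    have hx0 : x ≠ 0 := by
      rintro rfl
      have h := (hds 1 le_rfl).differentiableAt.congr_of_eventuallyEq
        (gTW_one_near_zero hr).symm
      exact not_differentiableAt_abs_zero h
    have hx1 : x ≠ 1 := by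
      rintro rfl
      have h := (hds 1 le_rfl).differentiableAt.congr_of_eventuallyEq
        (gTW_one_near_one hr).symm
      exact not_diff_abs_sub 1 h
    have hxIoo : x ∈ Set.Ioo (0:ℝ) 1 :=
      ⟨lt_of_le_of_ne hx.1 (Ne.symm hx0), lt_of_le_of_ne hx.2 hx1⟩
    have key : ∀ n, 1 ≤ n → HasDerivAt (psiTW r n) (s n * (r:ℝ)^(n-1)) x := by
      intro n hn
      have h1 : HasDerivAt (fun y => psiTW r n y / (r:ℝ)^(n-1)) (s n) x :=
        (hds n hn).congr_of_eventuallyEq (gTW_eventuallyEq hr hn hxIoo).symm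
      have h2 := h1.const_mul ((r:ℝ)^(n-1))
      have h3 : (fun y => (r:ℝ)^(n-1) * (psiTW r n y / (r:ℝ)^(n-1))) = psiTW r n := by
        funext y
        field_simp
      rw [h3] at h2
      rw [mul_comm]; exact h2
    refine ⟨fun n hn => (key n hn).differentiableAt, ?_⟩
    have hsum : ∀ N, ∑ k ∈ Finset.Icc 1 N, deriv (psiTW r k) x / (r:ℝ)^(k-1) =
        ∑ k ∈ Finset.Icc 1 N, s k := by
      intro N
      apply Finset.sum_congr rfl
      intro k hk
      rw [Finset.mem_Icc] at hk
      rw [(key k hk.1).deriv]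
      have : ((r:ℝ))^(k-1) ≠ 0 := by positivity
      field_simp
    simp_rw [hsum]
    exact hT
  · rintro ⟨hx, hd, hT⟩
    refine ⟨hx, fun n => deriv (psiTW r n) x / (r:ℝ)^(n-1), ?_, hT⟩
    intro n hn
    have hx0 : x ≠ 0 := by rintro rfl; exact zero_notmem_Gset ⟨hd, hT⟩
    have hx1 : x ≠ 1 := by rintro rfl; exact one_notmem_Gset ⟨hd, hT⟩
    have hxIoo : x ∈ Set.Ioo (0:ℝ) 1 :=
      ⟨lt_of_le_of_ne hx.1 (Ne.symm hx0), lt_of_le_of_ne hx.2 hx1⟩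
    have h1 : HasDerivAt (fun y => psiTW r n y / (r:ℝ)^(n-1))
        (deriv (psiTW r n) x / (r:ℝ)^(n-1)) x := (hd n hn).hasDerivAt.div_const _
    exact h1.congr_of_eventuallyEq (gTW_eventuallyEq hr hn hxIoo)

lemma psiTW_one_sub (r n : ℕ) (y : ℝ) : psiTW r n (1 - y) = psiTW r n y := by
  simp only [psiTW, mul_sub, mul_one]
  have h1 : (r:ℝ)^(n-1) - (r:ℝ)^(n-1) * y = -((r:ℝ)^(n-1) * y) + (((r^(n-1):ℕ):ℤ):ℝ) := by
    push_cast; ring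
  rw [h1, phiTW_add_int, phiTW_neg]

lemma psi_hasDeriv_one_sub {r n : ℕ} {d x : ℝ} (h : HasDerivAt (psiTW r n) d (1 - x)) :
    HasDerivAt (psiTW r n) (-d) x := by
  have hf : HasDerivAt (fun y : ℝ => 1 - y) (-1) x := by
    simpa using (hasDerivAt_id x).const_sub 1
  have h2 := HasDerivAt.comp x h hf
  have h3 : (psiTW r n ∘ fun y : ℝ => 1 - y) = psiTW r n := by
    funext y; simp [Function.comp, psiTW_one_sub]
  rw [h3] at h2
  rw [show -d = d * -1 by ring]; exact h2

lemma Gset_one_sub {r : ℕ} (x : ℝ) : 1 - x ∈ GsetTW r atTop ↔ x ∈ GsetTW r atBot := by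
  have hdiff_iff : ∀ z : ℝ, (∀ n, 1 ≤ n → DifferentiableAt ℝ (psiTW r n) (1 - z)) ↔
      (∀ n, 1 ≤ n → DifferentiableAt ℝ (psiTW r n) z) := by
    intro z
    constructor
    · intro h n hn
      exact (psi_hasDeriv_one_sub ((h n hn).hasDerivAt)).differentiableAt
    · intro h n hn
      have h2 : HasDerivAt (psiTW r n) (deriv (psiTW r n) z) (1 - (1 - z)) := by
        simpa using (h n hn).hasDerivAt
      exact (psi_hasDeriv_one_sub h2).differentiableAt
  have hderiv : ∀ z : ℝ, ∀ n : ℕ, deriv (psiTW r n) (1 - z) = - deriv (psiTW r n) z := by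
    intro z n
    by_cases hd : DifferentiableAt ℝ (psiTW r n) (1 - z)
    · have h2 := psi_hasDeriv_one_sub hd.hasDerivAt
      rw [h2.deriv]
      ring
    · have hd2 : ¬ DifferentiableAt ℝ (psiTW r n) z := by
        intro h
        have h2 : HasDerivAt (psiTW r n) (deriv (psiTW r n) z) (1 - (1 - z)) := by
          simpa using h.hasDerivAt
        exact hd (psi_hasDeriv_one_sub h2).differentiableAt
      rw [deriv_zero_of_not_differentiableAt hd, deriv_zero_of_not_differentiableAt hd2]
      ring
  constructor
  · rintro ⟨hd, hT⟩
    refine ⟨(hdiff_iff x).mp hd, ?_⟩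
    have hsum : ∀ N, ∑ k ∈ Finset.Icc 1 N, deriv (psiTW r k) x / (r:ℝ)^(k-1) =
        - ∑ k ∈ Finset.Icc 1 N, deriv (psiTW r k) (1-x) / (r:ℝ)^(k-1) := by
      intro N
      rw [← Finset.sum_neg_distrib]
      exact Finset.sum_congr rfl fun k _ => by rw [hderiv x k]; ring
    simp_rw [hsum]
    exact tendsto_neg_atBot_iff.mpr hT
  · rintro ⟨hd, hT⟩
    refine ⟨(hdiff_iff x).mpr hd, ?_⟩
    have hsum : ∀ N, ∑ k ∈ Finset.Icc 1 N, deriv (psiTW r k) (1-x) / (r:ℝ)^(k-1) =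
        - ∑ k ∈ Finset.Icc 1 N, deriv (psiTW r k) x / (r:ℝ)^(k-1) := by
      intro N
      rw [← Finset.sum_neg_distrib]
      exact Finset.sum_congr rfl fun k _ => by rw [hderiv x k]; ring
    simp_rw [hsum]
    exact tendsto_neg_atTop_iff.mpr hT

lemma measurableSet_Gset_atTop (r : ℕ) : MeasurableSet (GsetTW r atTop) := by
  have h1 : GsetTW r atTop = {x : ℝ | ∀ n, 1 ≤ n → DifferentiableAt ℝ (psiTW r n) x} ∩
      {x : ℝ | Tendsto (fun N => ∑ k ∈ Finset.Icc 1 N,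
        deriv (psiTW r k) x / (r:ℝ)^(k-1)) atTop atTop} := rfl
  rw [h1]
  apply MeasurableSet.inter
  · have h2 : {x : ℝ | ∀ n, 1 ≤ n → DifferentiableAt ℝ (psiTW r n) x} =
        ⋂ n, ⋂ (_ : 1 ≤ n), {x | DifferentiableAt ℝ (psiTW r n) x} := by
      ext x; simp
    rw [h2]
    exact MeasurableSet.iInter fun n => MeasurableSet.iInter fun _ =>
      measurableSet_of_differentiableAt ℝ (psiTW r n)
  · have hF : ∀ N : ℕ, Measurable (fun x => ∑ k ∈ Finset.Icc 1 N,
        deriv (psiTW r k) x / (r:ℝ)^(k-1)) := by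
      intro N
      apply Finset.measurable_sum
      intro k _
      exact (measurable_deriv (psiTW r k)).div_const _
    have h3 : {x : ℝ | Tendsto (fun N => ∑ k ∈ Finset.Icc 1 N,
        deriv (psiTW r k) x / (r:ℝ)^(k-1)) atTop atTop} =
        ⋂ (m : ℕ), ⋃ (N₀ : ℕ), ⋂ (N : ℕ), ⋂ (_ : N₀ ≤ N),
          {x : ℝ | (m:ℝ) ≤ ∑ k ∈ Finset.Icc 1 N, deriv (psiTW r k) x / (r:ℝ)^(k-1)} := by
      ext x
      simp only [Set.mem_setOf_eq, Set.mem_iInter, Set.mem_iUnion]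
      constructor
      · intro h m
        have := (h.eventually (eventually_ge_atTop (m:ℝ)))
        rw [eventually_atTop] at this
        obtain ⟨N₀, hN₀⟩ := this
        exact ⟨N₀, fun N hN => hN₀ N hN⟩
      · intro h
        rw [tendsto_atTop_atTop]
        intro b
        obtain ⟨m, hm⟩ := exists_nat_ge b
        obtain ⟨N₀, hN₀⟩ := h m
        exact ⟨N₀, fun a ha => le_trans hm (hN₀ a ha)⟩
    rw [h3]
    exact MeasurableSet.iInter fun m => MeasurableSet.iUnion fun N₀ =>
      MeasurableSet.iInter fun N => MeasurableSet.iInter fun _ =>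
        measurableSet_le measurable_const (hF N)

lemma Gset_zero_or_one {r : ℕ} (hr : 2 ≤ r) :
    volume (GsetTW r atTop ∩ Set.Ioc (0:ℝ) 1) = 0 ∨
      volume (GsetTW r atTop ∩ Set.Ioc (0:ℝ) 1) = 1 := by
  set G := GsetTW r atTop with hG
  have hGmeas := measurableSet_Gset_atTop r
  set E : Set (AddCircle (1:ℝ)) :=
    (AddCircle.measurableEquivIoc 1 0) ⁻¹' {y : Set.Ioc (0:ℝ) (0+1) | (y:ℝ) ∈ G} with hE
  have hEmeas : MeasurableSet E :=
    (AddCircle.measurableEquivIoc 1 0).measurable (measurable_subtype_coe hGmeas)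
  have hpre : (QuotientAddGroup.mk : ℝ → AddCircle (1:ℝ)) ⁻¹' E = G := by
    ext x
    simp only [hE, Set.mem_preimage, Set.mem_setOf_eq]
    have hrep : ∃ k : ℤ, ((AddCircle.measurableEquivIoc 1 0
        ((x : AddCircle (1:ℝ)))) : ℝ) = x + k := by
      have h1 : ((AddCircle.measurableEquivIoc 1 0 ((x : AddCircle (1:ℝ)))) : ℝ) =
          toIocMod (one_pos) 0 x := by
        rfl
      rw [h1]
      refine ⟨-(toIocDiv one_pos 0 x), ?_⟩
      rw [← self_sub_toIocDiv_zsmul one_pos 0 x, zsmul_eq_mul, mul_one]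
      push_cast
      ring
    obtain ⟨k, hk⟩ := hrep
    rw [hk]
    exact Gset_add_int k x
  have hsmul : (fun z : AddCircle (1:ℝ) => r • z) ⁻¹' E = E := by
    apply (QuotientAddGroup.mk_surjective
      (s := AddSubgroup.zmultiples (1:ℝ))).preimage_injective.eq_iff.mp
    ext x
    simp only [Set.mem_preimage]
    have hcomm : ((r • x : ℝ) : AddCircle (1:ℝ)) = r • ((x : ℝ) : AddCircle (1:ℝ)) := by
      exact map_nsmul (QuotientAddGroup.mk' (AddSubgroup.zmultiples (1:ℝ))) r x
    have hxE : ∀ y : ℝ, ((y : ℝ) : AddCircle (1:ℝ)) ∈ E ↔ y ∈ G := fun y =>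
      Set.ext_iff.mp hpre y
    rw [← hcomm, hxE, hxE]
    have : (r • x : ℝ) = (r:ℝ) * x := by rw [nsmul_eq_mul]
    rw [this]
    exact Gset_mul_iff hr tendsto_add_const_iff_atTop x
  have herg : Ergodic (fun z : AddCircle (1:ℝ) => r • z) volume :=
    AddCircle.ergodic_nsmul (by omega : 1 < r)
  have hvolE : volume E = volume (G ∩ Set.Ioc (0:ℝ) 1) := by
    have h5 := AddCircle.add_projection_respects_measure (T := 1) 0 hEmeas
    rw [hpre] at h5
    norm_num at h5
    exact h5
  rcases herg.ae_empty_or_univ hEmeas hsmul with h | h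
  · left
    rw [← hvolE]
    exact ae_eq_empty.mp h
  · right
    rw [← hvolE]
    calc volume E = volume (Set.univ : Set (AddCircle (1:ℝ))) := measure_congr h
      _ = 1 := by rw [AddCircle.measure_univ]; norm_num

theorem stmt5 (r : ℕ) (hr : 2 ≤ r) :
    volume {x : ℝ | x ∈ Set.Icc (0:ℝ) 1 ∧ ∃ s : ℕ → ℝ,
      (∀ n, 1 ≤ n → HasDerivAt (gTW r n) (s n) x) ∧
      Tendsto (fun N => ∑ k ∈ Finset.Icc 1 N, s k) atTop atTop} = 0 ∧
    volume {x : ℝ | x ∈ Set.Icc (0:ℝ) 1 ∧ ∃ s : ℕ → ℝ,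
      (∀ n, 1 ≤ n → HasDerivAt (gTW r n) (s n) x) ∧
      Tendsto (fun N => ∑ k ∈ Finset.Icc 1 N, s k) atTop atBot} = 0 := by
  have hEp := E_eq hr atTop
  have hEm := E_eq hr atBot
  set G := GsetTW r atTop with hGdef
  have hGmeas : MeasurableSet G := measurableSet_Gset_atTop r
  have hEpmeas : MeasurableSet (Set.Icc (0:ℝ) 1 ∩ G) := measurableSet_Icc.inter hGmeas
  have hIccIoc : Set.Icc (0:ℝ) 1 ∩ G = G ∩ Set.Ioc (0:ℝ) 1 := by
    ext x
    constructor
    · rintro ⟨⟨h0, h1⟩, hg⟩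
      exact ⟨hg, lt_of_le_of_ne h0 (by rintro rfl; exact zero_notmem_Gset hg), h1⟩
    · rintro ⟨hg, h0, h1⟩
      exact ⟨⟨h0.le, h1⟩, hg⟩
  have hsym : Set.Icc (0:ℝ) 1 ∩ GsetTW r atBot =
      (fun x : ℝ => 1 - x) ⁻¹' (Set.Icc (0:ℝ) 1 ∩ G) := by
    ext x
    simp only [Set.mem_inter_iff, Set.mem_preimage, Set.mem_Icc]
    constructor
    · rintro ⟨⟨h0, h1⟩, hg⟩
      exact ⟨⟨by linarith, by linarith⟩, (Gset_one_sub x).mpr hg⟩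
    · rintro ⟨⟨h0, h1⟩, hg⟩
      exact ⟨⟨by linarith, by linarith⟩, (Gset_one_sub x).mp hg⟩
  have hmp : MeasurePreserving (fun x : ℝ => 1 - x) volume volume :=
    Measure.measurePreserving_sub_left volume 1
  have hvol_eq : volume (Set.Icc (0:ℝ) 1 ∩ GsetTW r atBot) =
      volume (Set.Icc (0:ℝ) 1 ∩ G) := by
    rw [hsym]
    exact hmp.measure_preimage hEpmeas.nullMeasurableSet
  have hdisj : Disjoint (Set.Icc (0:ℝ) 1 ∩ G) (Set.Icc (0:ℝ) 1 ∩ GsetTW r atBot) := by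
    rw [Set.disjoint_iff_inter_eq_empty]
    ext x
    simp only [Set.mem_inter_iff, Set.mem_empty_iff_false, iff_false, not_and]
    intro h1 h2 h3
    obtain ⟨-, -, hT⟩ := And.intro h1 h1.2
    obtain ⟨-, hB⟩ := h2
    exfalso
    have h4 := (hT.eventually (eventually_ge_atTop (1:ℝ))).and
      (h3.2.eventually (eventually_le_atBot (0:ℝ)))
    obtain ⟨N, hN1, hN0⟩ := h4.exists
    linarith
  have hEp0 : volume (Set.Icc (0:ℝ) 1 ∩ G) = 0 := by
    rcases Gset_zero_or_one hr with h | h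
    · rw [hIccIoc]; exact h
    · exfalso
      have hvolp : volume (Set.Icc (0:ℝ) 1 ∩ G) = 1 := by rw [hIccIoc]; exact h
      have hvolm : volume (Set.Icc (0:ℝ) 1 ∩ GsetTW r atBot) = 1 := by
        rw [hvol_eq]; exact hvolp
      have hEmmeas : MeasurableSet (Set.Icc (0:ℝ) 1 ∩ GsetTW r atBot) := by
        rw [hsym]; exact hmp.measurable hEpmeas
      have hunion : volume ((Set.Icc (0:ℝ) 1 ∩ G) ∪ (Set.Icc (0:ℝ) 1 ∩ GsetTW r atBot)) ≤
          volume (Set.Icc (0:ℝ) 1) := by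
        apply measure_mono
        rintro x (hx | hx) <;> exact hx.1
      rw [measure_union hdisj hEmmeas, hvolp, hvolm, Real.volume_Icc] at hunion
      norm_num at hunion
  constructor
  · rw [hEp]; exact hEp0
  · rw [hEm, hvol_eq]; exact hEp0
end

section
/- If r ≥ 3 is odd and x ∈ D̃ (the set of midpoints of consecutive r-adic points, i.e., points whose base-r expansion is eventually constant equal to (r-1)/2), then the right derivative of f_r at x is -∞ and the left derivative is +∞. -/
open Set Filter MeasureTheory Metric Topology

namespace TWaux

lemma phiTW_nonneg (x : ℝ) : 0 ≤ phiTW x := Metric.infDist_nonneg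

lemma phiTW_le_dist_int (x : ℝ) (m : ℤ) : phiTW x ≤ |x - m| := by
  simpa [phiTW, Real.dist_eq] using Metric.infDist_le_dist_of_mem (s := Set.range (Int.cast : ℤ → ℝ))
    (x := x) ⟨m, rfl⟩

lemma phiTW_le_half (x : ℝ) : phiTW x ≤ 1 / 2 :=
  (phiTW_le_dist_int x (round x)).trans (abs_sub_round x)

lemma phiTW_lipschitz (a b : ℝ) : phiTW a ≤ phiTW b + |a - b| := by
  simpa [phiTW, Real.dist_eq] using
    Metric.infDist_le_infDist_add_dist (s := Set.range (Int.cast : ℤ → ℝ)) (x := a) (y := b)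

/-- lower bound at half-odd points -/
lemma phiTW_half_odd_ge (j : ℤ) : 1 / 2 ≤ phiTW ((2 * (j : ℝ) + 1) / 2) := by
  by_contra hlt
  push_neg at hlt
  rw [phiTW, Metric.infDist_lt_iff (Set.range_nonempty _)] at hlt
  obtain ⟨y, ⟨m, rfl⟩, hy⟩ := hlt
  rw [Real.dist_eq] at hy
  have heq : (2 * (j : ℝ) + 1) / 2 - m = ((2 * (j - m) + 1 : ℤ) : ℝ) / 2 := by
    push_cast; ring
  have h1 : (1 : ℝ) ≤ |((2 * (j - m) + 1 : ℤ) : ℝ)| := by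
    rw [← Int.cast_abs]
    exact_mod_cast (by rcases abs_cases (2 * (j - m) + 1) with ⟨h,_⟩ | ⟨h,_⟩ <;> omega : (1 : ℤ) ≤ |2 * (j - m) + 1|)
  rw [heq, abs_div, abs_of_pos (show (0:ℝ) < 2 by norm_num)] at hy
  linarith

/-- upper bound near half-odd points -/
lemma phiTW_half_odd_le (j : ℤ) (t : ℝ) (ht : |t| ≤ 1 / 2) :
    phiTW ((2 * (j : ℝ) + 1) / 2 + t) ≤ 1 / 2 - |t| := by
  rcases le_or_gt 0 t with h0 | h0
  · rw [abs_of_nonneg h0] at ht ⊢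
    have hle := phiTW_le_dist_int ((2 * (j : ℝ) + 1) / 2 + t) (j + 1)
    have heq : (2 * (j : ℝ) + 1) / 2 + t - ((j + 1 : ℤ) : ℝ) = t - 1 / 2 := by
      push_cast; ring
    rw [heq, abs_of_nonpos (by linarith)] at hle
    linarith
  · rw [abs_of_neg h0] at ht ⊢
    have hle := phiTW_le_dist_int ((2 * (j : ℝ) + 1) / 2 + t) j
    have heq : (2 * (j : ℝ) + 1) / 2 + t - ((j : ℤ) : ℝ) = t + 1 / 2 := by
      ring
    rw [heq, abs_of_nonneg (by linarith)] at hle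
    linarith

lemma summable_fTW (r : ℕ) (hr : 3 ≤ r) (y : ℝ) :
    Summable (fun m : ℕ => (1 / (r : ℝ) ^ m) * phiTW ((r : ℝ) ^ m * y)) := by
  have hr1 : (1 : ℝ) < r := by exact_mod_cast (by omega : 1 < r)
  have hg : Summable (fun m : ℕ => (1 / (r : ℝ)) ^ m * (1 / 2)) :=
    (summable_geometric_of_lt_one (by positivity)
      (by rw [div_lt_one (by linarith)]; linarith)).mul_right _
  refine Summable.of_nonneg_of_le
    (fun m => mul_nonneg (by positivity) (phiTW_nonneg _)) (fun m => ?_) hg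
  rw [div_pow, one_pow]
  exact mul_le_mul_of_nonneg_left (phiTW_le_half _) (by positivity)

/-- `r^m * x` is a half-odd point for `m ≥ c` when `x = (2k+1)/(2 r^c)` and `r` odd. -/
lemma pow_mul_midpoint (r : ℕ) (hr : 3 ≤ r) (hodd : Odd r) (c : ℕ) (k : ℤ) (m : ℕ)
    (hm : c ≤ m) :
    ∃ j : ℤ, (r : ℝ) ^ m * ((2 * (k : ℝ) + 1) / (2 * (r : ℝ) ^ c)) = (2 * (j : ℝ) + 1) / 2 := by
  obtain ⟨p, rfl⟩ := Nat.exists_eq_add_of_le hm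
  have hodd' : Odd ((r : ℤ) ^ p * (2 * k + 1)) :=
    (Odd.pow (by exact_mod_cast hodd)).mul (⟨k, by ring⟩)
  obtain ⟨j, hj⟩ := hodd'
  refine ⟨j, ?_⟩
  have hrne : (r : ℝ) ≠ 0 := by positivity
  have hcastj : (r : ℝ) ^ p * (2 * (k : ℝ) + 1) = 2 * (j : ℝ) + 1 := by
    have := congrArg (Int.cast : ℤ → ℝ) hj
    push_cast at this
    linarith
  have hsplit : (r : ℝ) ^ (c + p) * ((2 * (k : ℝ) + 1) / (2 * (r : ℝ) ^ c)) =
      ((r : ℝ) ^ p * (2 * (k : ℝ) + 1)) / 2 := by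
    rw [pow_add]; field_simp
  rw [hsplit, hcastj]

/-- Key estimate: for `0 < h ≤ 1/(2 r^(c+N))` and `|y - x| = h`,
    `f(y) - f(x) ≤ (c - (N+1)) h`. -/
lemma key (r : ℕ) (hr : 3 ≤ r) (hodd : Odd r) (c N : ℕ) (k : ℤ) (x : ℝ)
    (hx : x = (2 * (k : ℝ) + 1) / (2 * (r : ℝ) ^ c)) (h : ℝ) (h0 : 0 < h)
    (hsmall : h ≤ 1 / (2 * (r : ℝ) ^ (c + N))) (y : ℝ) (hy : |y - x| = h) :
    fTW r y - fTW r x ≤ ((c : ℝ) - (N + 1)) * h := by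
  have hr1 : (1 : ℝ) < r := by exact_mod_cast (by omega : 1 < r)
  have hrpos : (0 : ℝ) < r := by linarith
  have hsum_y := summable_fTW r hr y
  have hsum_x := summable_fTW r hr x
  set d : ℕ → ℝ := fun m => (1 / (r : ℝ) ^ m) * phiTW ((r : ℝ) ^ m * y)
      - (1 / (r : ℝ) ^ m) * phiTW ((r : ℝ) ^ m * x) with hd
  have heq : fTW r y - fTW r x = ∑' m, d m := by
    rw [fTW, fTW, ← Summable.tsum_sub hsum_y hsum_x]
  set b : ℕ → ℝ := fun m => if m < c then h else if m ≤ c + N then -h else 0 with hb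
  -- termwise bound
  have hdb : ∀ m, d m ≤ b m := by
    intro m
    by_cases hmc : m < c
    · simp only [hb, hd, if_pos hmc]
      have hl := phiTW_lipschitz ((r : ℝ) ^ m * y) ((r : ℝ) ^ m * x)
      have habs : |(r : ℝ) ^ m * y - (r : ℝ) ^ m * x| = (r : ℝ) ^ m * h := by
        rw [← mul_sub, abs_mul, abs_of_pos (by positivity), hy]
      have hpow : (0 : ℝ) < (r : ℝ) ^ m := by positivity
      calc (1 / (r : ℝ) ^ m) * phiTW ((r : ℝ) ^ m * y)
            - (1 / (r : ℝ) ^ m) * phiTW ((r : ℝ) ^ m * x)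
          = (1 / (r : ℝ) ^ m) * (phiTW ((r : ℝ) ^ m * y) - phiTW ((r : ℝ) ^ m * x)) := by ring
        _ ≤ (1 / (r : ℝ) ^ m) * ((r : ℝ) ^ m * h) := by
            apply mul_le_mul_of_nonneg_left _ (by positivity)
            rw [← habs]; linarith [hl]
        _ = h := by field_simp
    · push_neg at hmc
      obtain ⟨j, hj⟩ := pow_mul_midpoint r hr hodd c k m hmc
      rw [← hx] at hj
      have hxval : (1 : ℝ) / 2 ≤ phiTW ((r : ℝ) ^ m * x) := by
        rw [hj]; exact phiTW_half_odd_ge j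
      have hyx : (r : ℝ) ^ m * y = (2 * (j : ℝ) + 1) / 2 + (r : ℝ) ^ m * (y - x) := by
        rw [← hj]; ring
      have hpow : (0 : ℝ) < (r : ℝ) ^ m := by positivity
      have habs : |(r : ℝ) ^ m * (y - x)| = (r : ℝ) ^ m * h := by
        rw [abs_mul, abs_of_pos hpow, hy]
      by_cases hmN : m ≤ c + N
      · -- exact decrease
        simp only [hb, hd, if_neg (not_lt.mpr hmc), if_pos hmN]
        have htle : |(r : ℝ) ^ m * (y - x)| ≤ 1 / 2 := by
          rw [habs]
          have hmono : (r : ℝ) ^ m ≤ (r : ℝ) ^ (c + N) :=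
            pow_le_pow_right₀ (by linarith) hmN
          calc (r : ℝ) ^ m * h ≤ (r : ℝ) ^ (c + N) * h :=
                mul_le_mul_of_nonneg_right hmono h0.le
            _ ≤ (r : ℝ) ^ (c + N) * (1 / (2 * (r : ℝ) ^ (c + N))) :=
                mul_le_mul_of_nonneg_left hsmall (by positivity)
            _ = 1 / 2 := by field_simp
        have hup := phiTW_half_odd_le j _ htle
        rw [← hyx] at hup
        have h1 := mul_le_mul_of_nonneg_left hup
          (show (0:ℝ) ≤ 1 / (r : ℝ) ^ m by positivity)
        have h2 := mul_le_mul_of_nonneg_left hxval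
          (show (0:ℝ) ≤ 1 / (r : ℝ) ^ m by positivity)
        have h3 : (1 / (r : ℝ) ^ m) * (1 / 2 - |(r : ℝ) ^ m * (y - x)|)
            - (1 / (r : ℝ) ^ m) * (1 / 2) = -h := by
          rw [habs]; field_simp; ring
        linarith
      · -- just nonpositive
        simp only [hb, hd, if_neg (not_lt.mpr hmc), if_neg hmN]
        have hup := phiTW_le_half ((r : ℝ) ^ m * y)
        have h1 := mul_le_mul_of_nonneg_left hup
          (show (0:ℝ) ≤ 1 / (r : ℝ) ^ m by positivity)
        have h2 := mul_le_mul_of_nonneg_left hxval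
          (show (0:ℝ) ≤ 1 / (r : ℝ) ^ m by positivity)
        linarith
  -- sum of the bound
  have hbsum : ∑' m, b m = (c : ℝ) * h + ((N : ℝ) + 1) * (-h) := by
    have hzero : ∀ m ∉ Finset.range (c + N + 1), b m = 0 := by
      intro m hm
      simp only [Finset.mem_range, not_lt] at hm
      simp only [hb]
      rw [if_neg (by omega), if_neg (by omega)]
    rw [tsum_eq_sum hzero, Finset.range_eq_Ico,
      ← Finset.sum_Ico_consecutive b (Nat.zero_le c) (by omega : c ≤ c + N + 1)]
    have h1 : ∑ m ∈ Finset.Ico 0 c, b m = (c : ℝ) * h := by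
      have hval : ∀ m ∈ Finset.Ico 0 c, b m = h := by
        intro m hm
        simp only [Finset.mem_Ico] at hm
        simp only [hb]
        rw [if_pos hm.2]
      rw [Finset.sum_congr rfl hval, Finset.sum_const, Nat.card_Ico, nsmul_eq_mul]
      simp
    have h2 : ∑ m ∈ Finset.Ico c (c + N + 1), b m = ((N : ℝ) + 1) * (-h) := by
      have hval : ∀ m ∈ Finset.Ico c (c + N + 1), b m = -h := by
        intro m hm
        simp only [Finset.mem_Ico] at hm
        simp only [hb]
        rw [if_neg (by omega), if_pos (by omega)]
      rw [Finset.sum_congr rfl hval, Finset.sum_const, Nat.card_Ico, nsmul_eq_mul]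
      have : c + N + 1 - c = N + 1 := by omega
      rw [this]
      push_cast
      ring
    rw [h1, h2]
  have hbsummable : Summable b := by
    apply summable_of_finite_support
    apply Set.Finite.subset (Set.finite_Icc 0 (c + N + 1))
    intro m hm
    simp only [Function.mem_support, hb] at hm
    by_contra hc
    simp only [Set.mem_Icc, not_and_or, not_le] at hc
    rcases hc with hc | hc
    · omega
    · exact hm (by rw [if_neg (by omega), if_neg (by omega)])
  have hdsummable : Summable d := hsum_y.sub hsum_x
  have hle := Summable.tsum_le_tsum hdb hdsummable hbsummable
  rw [heq]
  calc ∑' m, d m ≤ ∑' m, b m := hle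
    _ = (c : ℝ) * h + ((N : ℝ) + 1) * (-h) := hbsum
    _ = ((c : ℝ) - (N + 1)) * h := by ring

end TWaux

theorem stmt8 (r : ℕ) (hr : 3 ≤ r) (hodd : Odd r) (x : ℝ) (hx : x ∈ DtTWall r) :
    Tendsto (fun h : ℝ => (fTW r (x + h) - fTW r x) / h) (𝓝[>] 0) atBot ∧
    Tendsto (fun h : ℝ => (fTW r (x - h) - fTW r x) / (-h)) (𝓝[>] 0) atTop := by
  have hr1 : (1 : ℝ) < r := by exact_mod_cast (by omega : 1 < r)
  obtain ⟨n, hn⟩ := Set.mem_iUnion.mp hx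
  obtain ⟨hn1, hmem⟩ := Set.mem_iUnion.mp hn
  obtain ⟨⟨k, hk⟩, -⟩ := hmem
  set c := n - 1 with hc
  have hxc : x = (2 * (k : ℝ) + 1) / (2 * (r : ℝ) ^ c) := hk
  constructor
  · rw [Filter.tendsto_atBot]
    intro C
    obtain ⟨N, hN⟩ : ∃ N : ℕ, (c : ℝ) - ((N : ℝ) + 1) ≤ C := by
      obtain ⟨N, hNN⟩ := exists_nat_ge ((c : ℝ) - C)
      exact ⟨N, by linarith⟩
    have hε : (0 : ℝ) < 1 / (2 * (r : ℝ) ^ (c + N)) := by positivity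
    filter_upwards [Ioo_mem_nhdsGT_of_mem (Set.mem_Ico.mpr ⟨le_refl (0:ℝ), hε⟩)] with h hh
    obtain ⟨h0, hlt⟩ := hh
    have hkey := TWaux.key r hr hodd c N k x hxc h h0 hlt.le (x + h) (by
      rw [add_sub_cancel_left, abs_of_pos h0])
    rw [div_le_iff₀ h0]
    calc fTW r (x + h) - fTW r x ≤ ((c : ℝ) - ((N : ℝ) + 1)) * h := hkey
      _ ≤ C * h := mul_le_mul_of_nonneg_right hN h0.le
  · rw [Filter.tendsto_atTop]
    intro C
    obtain ⟨N, hN⟩ : ∃ N : ℕ, C ≤ ((N : ℝ) + 1) - (c : ℝ) := by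
      obtain ⟨N, hNN⟩ := exists_nat_ge (C + (c : ℝ))
      exact ⟨N, by linarith⟩
    have hε : (0 : ℝ) < 1 / (2 * (r : ℝ) ^ (c + N)) := by positivity
    filter_upwards [Ioo_mem_nhdsGT_of_mem (Set.mem_Ico.mpr ⟨le_refl (0:ℝ), hε⟩)] with h hh
    obtain ⟨h0, hlt⟩ := hh
    have hkey := TWaux.key r hr hodd c N k x hxc h h0 hlt.le (x - h) (by
      rw [sub_sub_cancel_left, abs_neg, abs_of_pos h0])
    rw [le_div_iff_of_neg (by linarith : -h < 0)]
    have hmul : ((c : ℝ) - ((N : ℝ) + 1)) * h ≤ C * (-h) := by nlinarith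
    linarith [hkey, hmul]
end

section
/- Let x ∉ D ∪ D̃ and suppose x lies in the open interval (a_n, b_n) which is a connected component of [0,1] \ D_n. Then (f_r(b_n) - f_r(x))/(b_n - x) ≤ Σ_{k=1}^n g'_k(x) ≤ (f_r(a_n) - f_r(x))/(a_n - x). -/
open Set Filter MeasureTheory Metric Topology

lemma le_infDistTW {x c : ℝ} {s : Set ℝ} (hs : s.Nonempty) (h : ∀ y ∈ s, c ≤ dist x y) :
    c ≤ Metric.infDist x s := by
  by_contra hc
  push_neg at hc
  obtain ⟨y, hy, hlt⟩ := (Metric.infDist_lt_iff hs).1 hc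
  exact absurd (h y hy) (not_le.2 hlt)

lemma round_eq_of_abs_lt {t : ℝ} {m : ℤ} (h : |t - m| < 1/2) : round t = m := by
  rw [round_eq, Int.floor_eq_iff]
  rw [abs_lt] at h
  constructor
  · linarith
  · push_cast
    linarith

lemma phiTW_nonneg (t : ℝ) : 0 ≤ phiTW t := Metric.infDist_nonneg

lemma phiTW_le_half (t : ℝ) : phiTW t ≤ 1/2 := by
  rw [phiTW_eq]; exact abs_sub_round t

lemma rpos (r : ℕ) (hr : 2 ≤ r) : (0:ℝ) < (r:ℝ) := by
  exact_mod_cast Nat.lt_of_lt_of_le Nat.zero_lt_two hr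

lemma round_bounds {t : ℝ} {M : ℤ} (h0 : 0 ≤ t) (h1 : t ≤ M) :
    0 ≤ round t ∧ round t ≤ M := by
  rw [round_eq]
  constructor
  · refine Int.le_floor.2 ?_
    push_cast; linarith
  · have h2 : ((⌊t + 1/2⌋ : ℤ) : ℝ) ≤ t + 1/2 := Int.floor_le _
    have h3 : ((⌊t + 1/2⌋ : ℤ) : ℝ) < (M:ℝ) + 1 := by linarith
    exact Int.lt_add_one_iff.1 (by exact_mod_cast h3)

lemma round_div_mem (r k : ℕ) (hr : 2 ≤ r) {y : ℝ} (hy : y ∈ Set.Icc (0:ℝ) 1) :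
    ((round (y * (r:ℝ)^k) : ℤ) : ℝ) / (r:ℝ)^k ∈ Set.Icc (0:ℝ) 1 := by
  have hN : (0:ℝ) < (r:ℝ)^k := pow_pos (rpos r hr) k
  have h0 : (0:ℝ) ≤ y * (r:ℝ)^k := mul_nonneg hy.1 hN.le
  have h1 : y * (r:ℝ)^k ≤ (((r:ℤ)^k : ℤ) : ℝ) := by
    push_cast
    nlinarith [hy.2]
  obtain ⟨hl, hu⟩ := round_bounds h0 h1
  constructor
  · positivity
  · rw [div_le_one hN]
    calc ((round (y * (r:ℝ)^k) : ℤ) : ℝ) ≤ (((r:ℤ)^k : ℤ) : ℝ) := by exact_mod_cast hu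
      _ = (r:ℝ)^k := by push_cast; ring

lemma round_div_memDTW (r k : ℕ) (hr : 2 ≤ r) {y : ℝ} (hy : y ∈ Set.Icc (0:ℝ) 1) :
    ((round (y * (r:ℝ)^k) : ℤ) : ℝ) / (r:ℝ)^k ∈ DTW r (k+1) := by
  refine ⟨⟨round (y * (r:ℝ)^k), ?_⟩, round_div_mem r k hr hy⟩
  rw [Nat.add_sub_cancel]

lemma gTW_formula (r k : ℕ) (hr : 2 ≤ r) {y : ℝ} (hy : y ∈ Set.Icc (0:ℝ) 1) :
    gTW r (k+1) y = |y - ((round (y * (r:ℝ)^k) : ℤ):ℝ) / (r:ℝ)^k| := by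
  have hN : (0:ℝ) < (r:ℝ)^k := pow_pos (rpos r hr) k
  have habs : ∀ j : ℤ, |y - (j:ℝ)/(r:ℝ)^k| = |y * (r:ℝ)^k - j| / (r:ℝ)^k := by
    intro j
    rw [show y - (j:ℝ)/(r:ℝ)^k = (y * (r:ℝ)^k - j)/(r:ℝ)^k by field_simp,
      abs_div, abs_of_pos hN]
  apply le_antisymm
  · refine (Metric.infDist_le_dist_of_mem (round_div_memDTW r k hr hy)).trans_eq
      (Real.dist_eq _ _)
  · refine le_infDistTW ⟨_, round_div_memDTW r k hr hy⟩ ?_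
    rintro z ⟨⟨j, rfl⟩, _⟩
    rw [Real.dist_eq, Nat.add_sub_cancel, habs j, habs (round (y * (r:ℝ)^k))]
    have hle : |y * (r:ℝ)^k - (round (y * (r:ℝ)^k) : ℤ)| ≤ |y * (r:ℝ)^k - (j:ℝ)| :=
      round_le (y * (r:ℝ)^k) j
    exact div_le_div_of_nonneg_right hle hN.le |>.trans_eq rfl

lemma gTW_eq_phi (r k : ℕ) (hr : 2 ≤ r) {y : ℝ} (hy : y ∈ Set.Icc (0:ℝ) 1) :
    gTW r (k+1) y = (1/(r:ℝ)^k) * phiTW ((r:ℝ)^k * y) := by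
  have hN : (0:ℝ) < (r:ℝ)^k := pow_pos (rpos r hr) k
  rw [gTW_formula r k hr hy, phiTW_eq, mul_comm ((r:ℝ)^k) y]
  rw [show y - ((round (y * (r:ℝ)^k) : ℤ):ℝ)/(r:ℝ)^k
      = (y * (r:ℝ)^k - round (y * (r:ℝ)^k))/(r:ℝ)^k by field_simp,
    abs_div, abs_of_pos hN]
  ring

lemma summableTW (r : ℕ) (hr : 2 ≤ r) (y : ℝ) :
    Summable (fun k : ℕ => (1/(r:ℝ)^k) * phiTW ((r:ℝ)^k * y)) := by
  have hr0 : (0:ℝ) < r := rpos r hr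
  have hlt : (1:ℝ)/(r:ℝ) < 1 := by
    rw [div_lt_one hr0]
    exact_mod_cast Nat.lt_of_lt_of_le Nat.one_lt_two hr
  have hgeo : Summable (fun k : ℕ => (1/2 : ℝ) * ((1:ℝ)/(r:ℝ))^k) :=
    (summable_geometric_of_lt_one (by positivity) hlt).mul_left _
  refine Summable.of_nonneg_of_le (fun k => ?_) (fun k => ?_) hgeo
  · have := phiTW_nonneg ((r:ℝ)^k * y)
    positivity
  · have h1 : phiTW ((r:ℝ)^k * y) ≤ 1/2 := phiTW_le_half _
    rw [one_div_pow, mul_comm ((1:ℝ)/2)]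
    exact mul_le_mul_of_nonneg_left h1 (by positivity)

lemma fTW_eq_tsum (r : ℕ) (hr : 2 ≤ r) {y : ℝ} (hy : y ∈ Set.Icc (0:ℝ) 1) :
    fTW r y = ∑' k : ℕ, gTW r (k+1) y :=
  tsum_congr fun k => (gTW_eq_phi r k hr hy).symm

lemma DTW_mono (r : ℕ) (hr : 2 ≤ r) {m n : ℕ} (h : m ≤ n) : DTW r m ⊆ DTW r n := by
  rintro z ⟨⟨j, hj⟩, hz⟩
  refine ⟨⟨j * (r:ℤ)^(n-1-(m-1)), ?_⟩, hz⟩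
  have hef : m - 1 ≤ n - 1 := Nat.sub_le_sub_right h 1
  have hpow : (r:ℝ)^(n-1) = (r:ℝ)^(m-1) * (r:ℝ)^(n-1-(m-1)) := by
    rw [← pow_add, Nat.add_sub_cancel' hef]
  have hN : (r:ℝ)^(m-1) ≠ 0 := (pow_pos (rpos r hr) _).ne'
  have hM : (r:ℝ)^(n-1-(m-1)) ≠ 0 := (pow_pos (rpos r hr) _).ne'
  rw [hj, hpow]
  push_cast
  field_simp

lemma keyTW (r : ℕ) (hr : 2 ≤ r) (n : ℕ) (a b x y : ℝ)
    (ha0 : 0 ≤ a) (hb1 : b ≤ 1)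
    (hax : a < x) (hxb : x < b)
    (hcomp : Set.Ioo a b ∩ DTW r n = ∅)
    (hxD : x ∉ DTWall r ∪ DtTWall r)
    (hya : a ≤ y) (hyb : y ≤ b)
    (k : ℕ) (hk : k + 1 ≤ n) (sk : ℝ) (hsk : HasDerivAt (gTW r (k+1)) sk x) :
    gTW r (k+1) y - gTW r (k+1) x ≤ sk * (y - x) := by
  have hN : (0:ℝ) < (r:ℝ)^k := pow_pos (rpos r hr) k
  have hx01 : x ∈ Set.Icc (0:ℝ) 1 := ⟨ha0.trans hax.le, hxb.le.trans hb1⟩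
  have hy01 : y ∈ Set.Icc (0:ℝ) 1 := ⟨ha0.trans hya, hyb.trans hb1⟩
  obtain ⟨m, hm⟩ : ∃ m : ℤ, m = round (x * (r:ℝ)^k) := ⟨_, rfl⟩
  obtain ⟨p, hp⟩ : ∃ p : ℝ, p = (m:ℝ)/(r:ℝ)^k := ⟨_, rfl⟩
  have hpmem : p ∈ DTW r (k+1) := by
    rw [hp, hm]
    exact round_div_memDTW r k hr hx01
  have hpn : p ∈ DTW r n := DTW_mono r hr hk hpmem
  have hpab : p ∉ Set.Ioo a b := fun h =>
    Set.eq_empty_iff_forall_notMem.1 hcomp p ⟨h, hpn⟩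
  have hxDall : ∀ j : ℕ, 1 ≤ j → x ∉ DTW r j := by
    intro j hj hmem
    exact hxD (Or.inl (Set.mem_biUnion hj hmem))
  have hxDtall : ∀ j : ℕ, 1 ≤ j → x ∉ DtTW r j := by
    intro j hj hmem
    exact hxD (Or.inr (Set.mem_biUnion hj hmem))
  have hxne : x * (r:ℝ)^k ≠ (m:ℝ) := by
    intro h
    refine hxDall (k+1) (Nat.le_add_left 1 k) ⟨⟨m, ?_⟩, hx01⟩
    rw [Nat.add_sub_cancel, eq_div_iff hN.ne']
    exact h
  have hhalf : |x * (r:ℝ)^k - (m:ℝ)| < 1/2 := by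
    rw [hm]
    refine lt_of_le_of_ne (abs_sub_round (x*(r:ℝ)^k)) ?_
    rw [← hm]
    intro heq
    rcases (abs_eq (by norm_num : (0:ℝ) ≤ 1/2)).1 heq with h | h
    · refine hxDtall (k+1) (Nat.le_add_left 1 k) ⟨⟨m, ?_⟩, hx01⟩
      rw [Nat.add_sub_cancel]
      field_simp
      linarith
    · refine hxDtall (k+1) (Nat.le_add_left 1 k) ⟨⟨m - 1, ?_⟩, hx01⟩
      rw [Nat.add_sub_cancel]
      push_cast
      field_simp
      linarith
  have hgx : gTW r (k+1) x = |x - p| := by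
    rw [gTW_formula r k hr hx01, ← hm, ← hp]
  have hgy : gTW r (k+1) y ≤ |y - p| :=
    (Metric.infDist_le_dist_of_mem hpmem).trans_eq (Real.dist_eq _ _)
  have hxp : x ≠ p := by
    intro h
    apply hxne
    rw [h, hp]
    field_simp
  have hev : gTW r (k+1) =ᶠ[𝓝 x] (fun z => |z - p|) := by
    have hcont : Continuous fun z : ℝ => |z * (r:ℝ)^k - (m:ℝ)| :=
      ((continuous_id.mul continuous_const).sub continuous_const).abs
    have hU : IsOpen {z : ℝ | (0 < z ∧ z < 1) ∧ |z * (r:ℝ)^k - (m:ℝ)| < 1/2} :=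
      ((isOpen_Ioo (a := (0:ℝ)) (b := 1)).and (isOpen_lt hcont continuous_const))
    have hxU : x ∈ {z : ℝ | (0 < z ∧ z < 1) ∧ |z * (r:ℝ)^k - (m:ℝ)| < 1/2} :=
      ⟨⟨ha0.trans_lt hax, hxb.trans_le hb1⟩, hhalf⟩
    filter_upwards [hU.mem_nhds hxU] with z hz
    rw [gTW_formula r k hr ⟨hz.1.1.le, hz.1.2.le⟩, round_eq_of_abs_lt hz.2, ← hp]
  rcases hxp.lt_or_gt with hpx | hpx
  · -- x < p : slope is -1
    have hev2 : gTW r (k+1) =ᶠ[𝓝 x] (fun z => p - z) := by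
      refine hev.trans ?_
      filter_upwards [Iio_mem_nhds hpx] with z hz
      rw [abs_of_neg (sub_neg.2 hz), neg_sub]
    have hd : HasDerivAt (gTW r (k+1)) (-1) x :=
      (hev2.hasDerivAt_iff).2 ((hasDerivAt_id x).const_sub p)
    have hsk1 : sk = -1 := hsk.unique hd
    have hbp : b ≤ p := by
      by_contra hc
      push_neg at hc
      exact hpab ⟨hax.trans hpx, hc⟩
    have hyP : |y - p| = p - y := by
      rw [abs_of_nonpos (by linarith), neg_sub]
    have hxP : |x - p| = p - x := by
      rw [abs_of_neg (by linarith), neg_sub]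
    rw [hsk1, hgx, hxP]
    have h5 := hgy.trans_eq hyP
    linarith
  · -- p < x : slope is 1
    have hev2 : gTW r (k+1) =ᶠ[𝓝 x] (fun z => z - p) := by
      refine hev.trans ?_
      filter_upwards [Ioi_mem_nhds hpx] with z hz
      exact abs_of_pos (sub_pos.2 hz)
    have hd : HasDerivAt (gTW r (k+1)) 1 x :=
      (hev2.hasDerivAt_iff).2 ((hasDerivAt_id x).sub_const p)
    have hsk1 : sk = 1 := hsk.unique hd
    have hpa : p ≤ a := by
      by_contra hc
      push_neg at hc
      exact hpab ⟨hc, hpx.trans hxb⟩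
    have hyP : |y - p| = y - p := by
      rw [abs_of_nonneg (by linarith)]
    have hxP : |x - p| = x - p := by
      rw [abs_of_pos (by linarith)]
    rw [hsk1, hgx, hxP]
    have h5 := hgy.trans_eq hyP
    linarith

theorem stmt10 (r : ℕ) (hr : 2 ≤ r) (n : ℕ) (hn : 1 ≤ n) (a b x : ℝ)
    (ha : a ∈ DTW r n) (hb : b ∈ DTW r n) (hax : a < x) (hxb : x < b)
    (hcomp : Set.Ioo a b ∩ DTW r n = ∅)
    (hxD : x ∉ DTWall r ∪ DtTWall r)
    (s : ℕ → ℝ) (hs : ∀ k, 1 ≤ k → HasDerivAt (gTW r k) (s k) x) :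
    (fTW r b - fTW r x) / (b - x) ≤ ∑ k ∈ Finset.Icc 1 n, s k ∧
    ∑ k ∈ Finset.Icc 1 n, s k ≤ (fTW r a - fTW r x) / (a - x) := by
  have hx01 : x ∈ Set.Icc (0:ℝ) 1 := ⟨ha.2.1.trans hax.le, hxb.le.trans hb.2.2⟩
  have hre : ∑ k ∈ Finset.Icc 1 n, s k = ∑ k ∈ Finset.range n, s (k+1) := by
    rw [show Finset.Icc 1 n = Finset.Ico 1 (n+1) by rfl, Finset.sum_Ico_eq_sum_range]
    simp [add_comm]
  have key : ∀ y : ℝ, a ≤ y → y ≤ b → y ∈ Set.Icc (0:ℝ) 1 → y ∈ DTW r n →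
      fTW r y - fTW r x ≤ (∑ k ∈ Finset.Icc 1 n, s k) * (y - x) := by
    intro y hya hyb hy01 hyD
    have hfy : fTW r y = ∑ k ∈ Finset.range n, gTW r (k+1) y := by
      rw [fTW_eq_tsum r hr hy01]
      refine tsum_eq_sum ?_
      intro k hk
      have hnk : n ≤ k + 1 := by
        have := Finset.mem_range.not.1 hk
        omega
      exact Metric.infDist_zero_of_mem (DTW_mono r hr hnk hyD)
    have hfx : ∑ k ∈ Finset.range n, gTW r (k+1) x ≤ fTW r x := by
      rw [fTW_eq_tsum r hr hx01]
      exact Summable.sum_le_tsum _ (fun k _ => Metric.infDist_nonneg)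
        ((summableTW r hr x).congr fun k => (gTW_eq_phi r k hr hx01).symm)
    have hsum : ∑ k ∈ Finset.range n, (gTW r (k+1) y - gTW r (k+1) x)
        ≤ ∑ k ∈ Finset.range n, s (k+1) * (y - x) := by
      refine Finset.sum_le_sum ?_
      intro k hk
      exact keyTW r hr n a b x y ha.2.1 hb.2.2 hax hxb hcomp hxD hya hyb k
        (Finset.mem_range.1 hk) (s (k+1)) (hs (k+1) (Nat.le_add_left 1 k))
    have hsub : ∑ k ∈ Finset.range n, (gTW r (k+1) y - gTW r (k+1) x)
        = (∑ k ∈ Finset.range n, gTW r (k+1) y) - ∑ k ∈ Finset.range n, gTW r (k+1) x :=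
      Finset.sum_sub_distrib _ _
    have hmul : ∑ k ∈ Finset.range n, s (k+1) * (y - x)
        = (∑ k ∈ Finset.Icc 1 n, s k) * (y - x) := by
      rw [hre, ← Finset.sum_mul]
    rw [← hmul]
    rw [hsub] at hsum
    linarith [hsum, hfx, hfy.le, hfy.ge]
  constructor
  · rw [div_le_iff₀ (by linarith)]
    exact key b (by linarith) le_rfl hb.2 hb
  · rw [le_div_iff_of_neg (by linarith)]
    exact key a le_rfl (by linarith) ha.2 ha
end

section
/- Let x ∉ D ∪ D̃. If Σ_{k=1}^∞ g'_k(x) = +∞ then the upper Dini derivatives satisfy D⁺f_r(x) = D⁻f_r(x) = +∞; if Σ_{k=1}^∞ g'_k(x) = -∞ then the lower Dini derivatives satisfy d₊f_r(x) = d₋f_r(x) = -∞. -/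
open Set Filter MeasureTheory Metric Topology

namespace TW13

lemma intRange_nonempty : (Set.range (Int.cast : ℤ → ℝ)).Nonempty := ⟨0, 0, by norm_num⟩

lemma phi_le {y : ℝ} (j : ℤ) : phiTW y ≤ |y - j| := by
  simpa [phiTW, Real.dist_eq] using
    Metric.infDist_le_dist_of_mem (show (j : ℝ) ∈ Set.range (Int.cast : ℤ → ℝ) from ⟨j, rfl⟩)

lemma le_phi {b y : ℝ} (h : ∀ j : ℤ, b ≤ |y - j|) : b ≤ phiTW y := by
  refine le_of_not_gt fun hlt => ?_
  rcases (Metric.infDist_lt_iff intRange_nonempty).1 hlt with ⟨z, ⟨j, rfl⟩, hz⟩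
  rw [Real.dist_eq] at hz
  exact absurd hz (not_lt.2 (h j))

lemma phi_nonneg (y : ℝ) : 0 ≤ phiTW y := Metric.infDist_nonneg

lemma phi_eq_left {y : ℝ} (i : ℤ) (h1 : (i : ℝ) ≤ y) (h2 : y ≤ i + 1/2) : phiTW y = y - i := by
  refine le_antisymm (by simpa [abs_of_nonneg (by linarith : (0:ℝ) ≤ y - i)] using phi_le (y := y) i)
    (le_phi fun j => ?_)
  rcases le_or_gt j i with hj | hj
  · have : (j : ℝ) ≤ i := by exact_mod_cast hj
    have : 0 ≤ y - j := by linarith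
    rw [abs_of_nonneg this]; linarith [show (j:ℝ) ≤ i from by exact_mod_cast hj]
  · have hj' : (i : ℝ) + 1 ≤ j := by exact_mod_cast hj
    have : y - j ≤ 0 := by linarith
    rw [abs_of_nonpos this]; linarith

lemma phi_eq_right {y : ℝ} (i : ℤ) (h1 : (i : ℝ) + 1/2 ≤ y) (h2 : y ≤ i + 1) : phiTW y = i + 1 - y := by
  have := phi_le (y := y) (i + 1)
  push_cast at this
  refine le_antisymm (by rwa [abs_of_nonpos (by linarith : y - ((i:ℝ)+1) ≤ 0), neg_sub] at this)
    (le_phi fun j => ?_)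
  rcases le_or_gt j i with hj | hj
  · have hj' : (j : ℝ) ≤ i := by exact_mod_cast hj
    have : 0 ≤ y - j := by linarith
    rw [abs_of_nonneg this]; linarith
  · have hj' : (i : ℝ) + 1 ≤ j := by exact_mod_cast hj
    have : y - j ≤ 0 := by linarith
    rw [abs_of_nonpos this]; linarith

lemma phi_le_half (y : ℝ) : phiTW y ≤ 1/2 := by
  have h1 : (⌊y⌋ : ℝ) ≤ y := Int.floor_le y
  have h2 : y < ⌊y⌋ + 1 := Int.lt_floor_add_one y
  rcases le_or_gt y (⌊y⌋ + 1/2) with h | h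
  · rw [phi_eq_left ⌊y⌋ h1 h]; linarith
  · rw [phi_eq_right ⌊y⌋ h.le h2.le]; linarith

lemma phi_neg_le (y : ℝ) : phiTW (-y) ≤ phiTW y := by
  have h1 : (⌊y⌋ : ℝ) ≤ y := Int.floor_le y
  have h2 : y < ⌊y⌋ + 1 := Int.lt_floor_add_one y
  rcases le_or_gt y (⌊y⌋ + 1/2) with h | h
  · rw [phi_eq_left ⌊y⌋ h1 h]
    have := phi_le (y := -y) (-⌊y⌋)
    push_cast at this
    rwa [show -y - -(⌊y⌋:ℝ) = -(y - ⌊y⌋) by ring, abs_neg,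
      abs_of_nonneg (by linarith : (0:ℝ) ≤ y - ⌊y⌋)] at this
  · rw [phi_eq_right ⌊y⌋ h.le h2.le]
    have := phi_le (y := -y) (-(⌊y⌋+1))
    push_cast at this
    rwa [show -y - -((⌊y⌋:ℝ)+1) = (⌊y⌋+1) - y by ring,
      abs_of_nonneg (by linarith : (0:ℝ) ≤ (⌊y⌋:ℝ)+1 - y)] at this

lemma phi_neg (y : ℝ) : phiTW (-y) = phiTW y :=
  le_antisymm (phi_neg_le y) (by simpa using phi_neg_le (-y))


/-- level-`n` summand of the Takagi–van der Waerden function -/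
noncomputable def G (r n : ℕ) (y : ℝ) : ℝ := (1 / (r : ℝ) ^ n) * phiTW ((r : ℝ) ^ n * y)

variable {r : ℕ}

lemma Rpos (hr : 2 ≤ r) {n : ℕ} : (0:ℝ) < (r:ℝ)^n := by positivity

lemma G_nonneg (hr : 2 ≤ r) (n : ℕ) (y : ℝ) : 0 ≤ G r n y := by
  have := phi_nonneg ((r:ℝ)^n * y); have := Rpos hr (n := n); unfold G; positivity

lemma G_le (hr : 2 ≤ r) (n : ℕ) (y : ℝ) : G r n y ≤ 1 / (2 * (r:ℝ)^n) := by
  have h := phi_le_half ((r:ℝ)^n * y)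
  have hp := Rpos hr (n := n)
  have := mul_le_mul_of_nonneg_left h (le_of_lt (by positivity : (0:ℝ) < 1/(r:ℝ)^n))
  calc G r n y ≤ (1/(r:ℝ)^n) * (1/2) := this
    _ = 1 / (2 * (r:ℝ)^n) := by field_simp

lemma G_eq_left (hr : 2 ≤ r) (n : ℕ) (i : ℤ) {y : ℝ}
    (h1 : (i:ℝ)/(r:ℝ)^n ≤ y) (h2 : y ≤ ((i:ℝ) + 1/2)/(r:ℝ)^n) :
    G r n y = y - i/(r:ℝ)^n := by
  have hp := Rpos hr (n := n)
  have e : phiTW ((r:ℝ)^n * y) = (r:ℝ)^n * y - i :=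
    phi_eq_left i (by rw [div_le_iff₀ hp] at h1; linarith [h1]) (by rw [le_div_iff₀ hp] at h2; linarith [h2])
  unfold G; rw [e]; field_simp; try ring

lemma G_eq_right (hr : 2 ≤ r) (n : ℕ) (i : ℤ) {y : ℝ}
    (h1 : ((i:ℝ) + 1/2)/(r:ℝ)^n ≤ y) (h2 : y ≤ ((i:ℝ) + 1)/(r:ℝ)^n) :
    G r n y = ((i:ℝ) + 1)/(r:ℝ)^n - y := by
  have hp := Rpos hr (n := n)
  have e : phiTW ((r:ℝ)^n * y) = (i:ℝ) + 1 - (r:ℝ)^n * y :=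
    phi_eq_right i (by rw [div_le_iff₀ hp] at h1; linarith [h1]) (by rw [le_div_iff₀ hp] at h2; linarith [h2])
  unfold G; rw [e]; field_simp; try ring

/-- if `[x, x+t]` is inside the half-cell of level `n` containing `x`, then the
increment of `G r n` over it is `σn * t`. -/
lemma slope_eq (hr : 2 ≤ r) (n : ℕ) {x σn : ℝ} (hd : HasDerivAt (G r n) σn x)
    (hx : ∀ j : ℤ, x ≠ j / (2 * (r:ℝ)^n)) {t : ℝ} (ht : 0 < t)
    (hsub : x + t ≤ ((⌊2 * (r:ℝ)^n * x⌋ : ℝ) + 1) / (2 * (r:ℝ)^n)) :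
    G r n (x + t) - G r n x = σn * t := by
  have hp := Rpos hr (n := n)
  set j : ℤ := ⌊2 * (r:ℝ)^n * x⌋ with hj
  have ha' : (j:ℝ) / (2 * (r:ℝ)^n) ≤ x := by
    rw [div_le_iff₀ (by positivity)]; linarith [Int.floor_le (2 * (r:ℝ)^n * x)]
  have ha : (j:ℝ) / (2 * (r:ℝ)^n) < x := lt_of_le_of_ne ha' (fun h => hx j h.symm)
  have hb : x < ((j:ℝ) + 1) / (2 * (r:ℝ)^n) := by
    rw [lt_div_iff₀ (by positivity)]; linarith [Int.lt_floor_add_one (2 * (r:ℝ)^n * x)]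
  rcases Int.even_or_odd j with ⟨i, hi⟩ | ⟨i, hi⟩
  · -- ascending cell [i/r^n, (i+1/2)/r^n]
    have key : ∀ y : ℝ, (j:ℝ)/(2*(r:ℝ)^n) ≤ y → y ≤ ((j:ℝ)+1)/(2*(r:ℝ)^n) →
        G r n y = y - i/(r:ℝ)^n := by
      intro y hy1 hy2
      have e1 : (i:ℝ)/(r:ℝ)^n = (j:ℝ)/(2*(r:ℝ)^n) := by
        rw [div_eq_div_iff hp.ne' (by positivity)]; push_cast [hi]; ring
      have e2 : ((i:ℝ)+1/2)/(r:ℝ)^n = ((j:ℝ)+1)/(2*(r:ℝ)^n) := by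
        rw [div_eq_div_iff hp.ne' (by positivity)]; push_cast [hi]; ring
      exact G_eq_left hr n i (by rw [e1]; exact hy1) (by rw [e2]; exact hy2)
    have hA : HasDerivAt (fun y : ℝ => y - (i:ℝ)/(r:ℝ)^n) 1 x := (hasDerivAt_id x).sub_const _
    have hEq : (fun y : ℝ => y - (i:ℝ)/(r:ℝ)^n) =ᶠ[𝓝 x] G r n := by
      filter_upwards [Ioo_mem_nhds ha hb] with y hy
      exact (key y hy.1.le hy.2.le).symm
    have hσ : σn = 1 := hd.unique (hA.congr_of_eventuallyEq hEq.symm)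
    rw [key (x+t) (by linarith) hsub, key x ha'
      (by linarith : x ≤ ((j:ℝ)+1)/(2*(r:ℝ)^n)), hσ]; ring
  · -- descending cell
    have key : ∀ y : ℝ, (j:ℝ)/(2*(r:ℝ)^n) ≤ y → y ≤ ((j:ℝ)+1)/(2*(r:ℝ)^n) →
        G r n y = ((i:ℝ)+1)/(r:ℝ)^n - y := by
      intro y hy1 hy2
      have e1 : ((i:ℝ)+1/2)/(r:ℝ)^n = (j:ℝ)/(2*(r:ℝ)^n) := by
        rw [div_eq_div_iff hp.ne' (by positivity)]; push_cast [hi]; ring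
      have e2 : ((i:ℝ)+1)/(r:ℝ)^n = ((j:ℝ)+1)/(2*(r:ℝ)^n) := by
        rw [div_eq_div_iff hp.ne' (by positivity)]; push_cast [hi]; ring
      exact G_eq_right hr n i (by rw [e1]; exact hy1) (by rw [e2]; exact hy2)
    have hA : HasDerivAt (fun y : ℝ => ((i:ℝ)+1)/(r:ℝ)^n - y) (-1) x := by
      simpa using (hasDerivAt_id x).const_sub (((i:ℝ)+1)/(r:ℝ)^n)
    have hEq : (fun y : ℝ => ((i:ℝ)+1)/(r:ℝ)^n - y) =ᶠ[𝓝 x] G r n := by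
      filter_upwards [Ioo_mem_nhds ha hb] with y hy
      exact (key y hy.1.le hy.2.le).symm
    have hσ : σn = -1 := hd.unique (hA.congr_of_eventuallyEq hEq.symm)
    rw [key (x+t) (by linarith) hsub, key x ha'
      (by linarith : x ≤ ((j:ℝ)+1)/(2*(r:ℝ)^n)), hσ]; ring


lemma summable_G (hr : 2 ≤ r) (y : ℝ) : Summable (fun n => G r n y) := by
  have hr1 : (1:ℝ) < r := lt_of_lt_of_le one_lt_two (by exact_mod_cast hr)
  have hgeo : Summable (fun n : ℕ => (1/2 : ℝ) * (1/(r:ℝ))^n) :=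
    (summable_geometric_of_lt_one (by positivity) (by rw [div_lt_one (by linarith)]; linarith)).mul_left _
  refine Summable.of_nonneg_of_le (fun n => G_nonneg hr n y) (fun n => ?_) hgeo
  have := G_le hr n y
  calc G r n y ≤ 1/(2*(r:ℝ)^n) := this
    _ = (1/2) * (1/(r:ℝ))^n := by rw [div_pow, one_pow]; field_simp

lemma core (hr : 2 ≤ r) {x : ℝ} (hx : ∀ (n : ℕ) (j : ℤ), x ≠ j / (2 * (r:ℝ)^n))
    (σ : ℕ → ℝ) (hσ : ∀ n, HasDerivAt (G r n) (σ n) x) (m : ℕ) :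
    ∃ t : ℝ, 0 < t ∧ t ≤ 1/(2*(r:ℝ)^m) ∧ ∃ N : ℕ, m ≤ N ∧
      |(∑' n, G r n (x+t)) - (∑' n, G r n x) - (∑ n ∈ Finset.range (N+1), σ n) * t| ≤ 2*t := by
  classical
  have hr1 : (1:ℝ) < r := lt_of_lt_of_le one_lt_two (by exact_mod_cast hr)
  have hr0 : (0:ℝ) < r := by linarith
  set j₀ : ℤ := ⌊2*(r:ℝ)^m*x⌋ with hj₀
  set t : ℝ := ((j₀:ℝ)+1)/(2*(r:ℝ)^m) - x with htdef
  have hxt : x + t = ((j₀:ℝ)+1)/(2*(r:ℝ)^m) := by rw [htdef]; ring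
  have ht : 0 < t := by
    have := Int.lt_floor_add_one (2*(r:ℝ)^m*x)
    rw [htdef, sub_pos, lt_div_iff₀ (by positivity)]; linarith
  have htm : t ≤ 1/(2*(r:ℝ)^m) := by
    have := Int.floor_le (2*(r:ℝ)^m*x)
    rw [htdef, sub_le_iff_le_add, div_le_iff₀ (by positivity)]
    rw [← hj₀] at this
    push_cast
    rw [add_mul, div_mul_cancel₀ _ (by positivity : 2*(r:ℝ)^m ≠ 0)]
    linarith
  refine ⟨t, ht, htm, ?_⟩
  -- choose N maximal with 2 t r^N ≤ 1
  set P : ℕ → Prop := fun n => 2*t*(r:ℝ)^n ≤ 1 with hP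
  have hPm : P m := by
    rw [hP]
    have : 2*t ≤ 1/(r:ℝ)^m := by
      rw [le_div_iff₀ (by positivity)]
      have := htm
      rw [le_div_iff₀ (by positivity : (0:ℝ) < 2*(r:ℝ)^m)] at this
      linarith
    calc 2*t*(r:ℝ)^m ≤ (1/(r:ℝ)^m)*(r:ℝ)^m := by
          apply mul_le_mul_of_nonneg_right this (by positivity)
      _ = 1 := by field_simp
  obtain ⟨B', hB'⟩ : ∃ B : ℕ, 1/(2*t) < (r:ℝ)^B := pow_unbounded_of_one_lt _ hr1
  have hnotP : ∀ k : ℕ, B' ≤ k → ¬ P k := by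
    intro k hk
    rw [hP]
    push_neg
    have h1 : (r:ℝ)^B' ≤ (r:ℝ)^k := pow_le_pow_right₀ (by linarith) hk
    rw [div_lt_iff₀ (by positivity)] at hB'
    nlinarith
  set N : ℕ := Nat.findGreatest P (max B' m) with hN
  have hmN : m ≤ N := Nat.le_findGreatest (le_max_right _ _) hPm
  have hPN : P N := Nat.findGreatest_spec (le_max_right _ _) hPm
  have hPN1 : ¬ P (N+1) := by
    rcases le_or_gt (N+1) (max B' m) with h | h
    · exact Nat.findGreatest_is_greatest (Nat.lt_succ_self N) h
    · refine hnotP _ ?_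
      have := le_max_left B' m
      omega
  have htN : 2*t*(r:ℝ)^N ≤ 1 := hPN
  have htN1 : 1 < 2*t*(r:ℝ)^(N+1) := not_le.mp hPN1
  refine ⟨N, hmN, ?_⟩
  -- head: for every n ≤ N, [x, x+t] is inside a single half-cell of level n
  have head : ∀ n : ℕ, n ≤ N → x + t ≤ ((⌊2*(r:ℝ)^n*x⌋ : ℝ) + 1)/(2*(r:ℝ)^n) := by
    intro n hn
    by_contra hcon
    push_neg at hcon
    set jn : ℤ := ⌊2*(r:ℝ)^n*x⌋ with hjn
    have hxe : x < ((jn:ℝ)+1)/(2*(r:ℝ)^n) := by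
      rw [lt_div_iff₀ (by positivity)]
      have := Int.lt_floor_add_one (2*(r:ℝ)^n*x)
      rw [← hjn] at this; push_cast; linarith
    rcases le_or_gt n m with hnm | hmn
    · -- the right endpoint of the level-n cell is a level-m lattice point > x, hence ≥ x+t
      have hpow : (r:ℝ)^(m-n) * (r:ℝ)^n = (r:ℝ)^m := by
        rw [← pow_add, Nat.sub_add_cancel hnm]
      set z : ℤ := (jn+1) * (r^(m-n) : ℕ) with hz
      have hze : ((jn:ℝ)+1)/(2*(r:ℝ)^n) = (z:ℝ)/(2*(r:ℝ)^m) := by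
        rw [div_eq_div_iff (by positivity) (by positivity), hz]
        push_cast
        linear_combination (-2*(jn:ℝ)-2)*hpow
      have h1 : 2*(r:ℝ)^m*x < z := by
        rw [hze, lt_div_iff₀ (by positivity)] at hxe; linarith
      have h2 : j₀ < z := Int.floor_lt.2 (by exact_mod_cast h1)
      have h3 : x + t ≤ (z:ℝ)/(2*(r:ℝ)^m) := by
        rw [hxt, div_le_div_iff₀ (by positivity) (by positivity)]
        have hz' : ((j₀:ℝ)+1) ≤ (z:ℝ) := by exact_mod_cast h2
        nlinarith [hz', (by positivity : (0:ℝ) < 2*(r:ℝ)^m)]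
      rw [hze] at hcon
      linarith
    · -- x + t is itself a level-n lattice point; two lattice points in (x, x+t] clash
      have hpow : (r:ℝ)^(n-m) * (r:ℝ)^m = (r:ℝ)^n := by
        rw [← pow_add, Nat.sub_add_cancel hmn.le]
      set z : ℤ := (j₀+1) * (r^(n-m) : ℕ) with hz
      have hze : x + t = (z:ℝ)/(2*(r:ℝ)^n) := by
        rw [hxt, div_eq_div_iff (by positivity) (by positivity), hz]
        push_cast
        linear_combination (-2*(j₀:ℝ)-2)*hpow
      have h1 : (jn:ℝ)+1 < z := by
        have hd : ((jn:ℝ)+1)/(2*(r:ℝ)^n) < (z:ℝ)/(2*(r:ℝ)^n) := by rw [← hze]; exact hcon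
        rw [div_lt_div_iff₀ (by positivity) (by positivity)] at hd
        exact lt_of_mul_lt_mul_right hd (by positivity)
      have h2 : jn + 1 + 1 ≤ z := by exact_mod_cast Int.add_one_le_iff.2 (by exact_mod_cast h1)
      have h3 : x + t - ((jn:ℝ)+1)/(2*(r:ℝ)^n) ≥ 1/(2*(r:ℝ)^n) := by
        rw [hze, div_sub_div_same, ge_iff_le, div_le_div_iff₀ (by positivity) (by positivity)]
        have hz' : ((jn:ℝ)+1+1) ≤ z := by exact_mod_cast h2
        nlinarith [hz', (by positivity : (0:ℝ) < 2*(r:ℝ)^n)]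
    -- ... contradiction with t ≤ 1/(2 r^N) ≤ 1/(2 r^n)
      have ht' : t ≤ 1/(2*(r:ℝ)^N) := by
        rw [le_div_iff₀ (by positivity)]; linarith
      have hlev : 1/(2*(r:ℝ)^N) ≤ 1/(2*(r:ℝ)^n) := by
        apply one_div_le_one_div_of_le (by positivity)
        have : (r:ℝ)^n ≤ (r:ℝ)^N := pow_le_pow_right₀ (by linarith) hn
        linarith
      linarith
  have headEq : ∀ n : ℕ, n ≤ N → G r n (x+t) - G r n x = σ n * t := fun n hn =>
    slope_eq hr n (hσ n) (hx n) ht (head n hn)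
  have hs1 : Summable (fun n => G r n (x+t)) := summable_G hr _
  have hs2 : Summable (fun n => G r n x) := summable_G hr _
  have hdiff : Summable (fun n => G r n (x+t) - G r n x) := hs1.sub hs2
  have hsig : (∑' n, G r n (x+t)) - (∑' n, G r n x)
      = ∑' n, (G r n (x+t) - G r n x) := (Summable.tsum_sub hs1 hs2).symm
  have hsplit := Summable.sum_add_tsum_nat_add (f := fun n => G r n (x+t) - G r n x) (N+1) hdiff
  have hhead : ∑ i ∈ Finset.range (N+1), (G r i (x+t) - G r i x)
      = (∑ n ∈ Finset.range (N+1), σ n) * t := by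
    rw [Finset.sum_mul]
    refine Finset.sum_congr rfl fun i hi => headEq i ?_
    exact Nat.lt_succ_iff.mp (Finset.mem_range.mp hi)
  -- tail estimate
  have htail : |∑' i, (G r (i+(N+1)) (x+t) - G r (i+(N+1)) x)| ≤ 2*t := by
    have hgeo : HasSum (fun i : ℕ => (1/(2*(r:ℝ)^(N+1))) * (1/(r:ℝ))^i)
        ((1/(2*(r:ℝ)^(N+1))) * (1 - 1/(r:ℝ))⁻¹) := by
      exact (hasSum_geometric_of_lt_one (by positivity)
        (by rw [div_lt_one (by linarith)]; linarith)).mul_left _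
    have hbd : ∀ i : ℕ, ‖G r (i+(N+1)) (x+t) - G r (i+(N+1)) x‖
        ≤ (1/(2*(r:ℝ)^(N+1))) * (1/(r:ℝ))^i := by
      intro i
      rw [Real.norm_eq_abs, abs_sub_le_iff]
      have e : (1/(2*(r:ℝ)^(N+1))) * (1/(r:ℝ))^i = 1/(2*(r:ℝ)^(i+(N+1))) := by
        rw [div_pow, one_pow, pow_add]
        field_simp
        ring
      rw [e]
      constructor
      · linarith [G_le hr (i+(N+1)) (x+t), G_nonneg hr (i+(N+1)) x]
      · linarith [G_le hr (i+(N+1)) x, G_nonneg hr (i+(N+1)) (x+t)]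
    have := tsum_of_norm_bounded hgeo hbd
    rw [Real.norm_eq_abs] at this
    refine this.trans ?_
    have h1 : 1/(2*(r:ℝ)^(N+1)) < t := by
      rw [div_lt_iff₀ (by positivity)]
      linarith
    have hhalf : (1/2:ℝ) ≤ 1 - 1/(r:ℝ) := by
      have : 1/(r:ℝ) ≤ 1/2 := by
        apply one_div_le_one_div_of_le
        · norm_num
        · exact_mod_cast hr
      linarith
    have h2 : (1 - 1/(r:ℝ))⁻¹ ≤ 2 := by
      calc (1 - 1/(r:ℝ))⁻¹ ≤ (1/2:ℝ)⁻¹ := by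
            apply inv_anti₀ (by norm_num) hhalf
        _ = 2 := by norm_num
    have h3 : (0:ℝ) ≤ (1 - 1/(r:ℝ))⁻¹ := by positivity
    calc (1/(2*(r:ℝ)^(N+1))) * (1 - 1/(r:ℝ))⁻¹ ≤ t * 2 :=
          mul_le_mul h1.le h2 h3 ht.le
      _ = 2*t := by ring
  have key : (∑' n, G r n (x+t)) - (∑' n, G r n x) - (∑ n ∈ Finset.range (N+1), σ n) * t
      = ∑' i, (G r (i+(N+1)) (x+t) - G r (i+(N+1)) x) := by
    rw [hsig, ← hsplit, hhead]; ring
  rw [key]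
  exact htail


-- fTW is the sum of the G's
lemma fTW_eq (r : ℕ) (y : ℝ) : fTW r y = ∑' n, G r n y := rfl

lemma G_neg (hr : 2 ≤ r) (n : ℕ) (y : ℝ) : G r n (-y) = G r n y := by
  unfold G
  rw [show (r:ℝ)^n * (-y) = -((r:ℝ)^n * y) by ring, phi_neg]

lemma fTW_neg (hr : 2 ≤ r) (y : ℝ) : fTW r (-y) = fTW r y := by
  rw [fTW_eq, fTW_eq]
  exact tsum_congr fun n => G_neg hr n y

-- gTW coincides with G on [0,1]
lemma gTW_eq (hr : 2 ≤ r) (n : ℕ) {y : ℝ} (hy : y ∈ Set.Icc (0:ℝ) 1) :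
    gTW r (n+1) y = G r n y := by
  have hp : (0:ℝ) < (r:ℝ)^n := Rpos hr
  have hD : DTW r (n+1) = {z : ℝ | ∃ k : ℤ, z = (k : ℝ) / (r:ℝ)^n} ∩ Set.Icc 0 1 := by
    simp [DTW]
  have hne : (DTW r (n+1)).Nonempty := by
    refine ⟨0, ?_⟩
    rw [hD]
    exact ⟨⟨0, by simp⟩, by norm_num⟩
  refine le_antisymm ?_ ?_
  · -- gTW ≤ G : find nearest lattice point inside [0,1]
    set u : ℝ := (r:ℝ)^n * y with hu
    have hu0 : 0 ≤ u := by
      have := hy.1; positivity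
    have hu1 : u ≤ (r:ℝ)^n := by
      have := hy.2
      calc u ≤ (r:ℝ)^n * 1 := by
            apply mul_le_mul_of_nonneg_left this hp.le
        _ = (r:ℝ)^n := by ring
    have hfl0 : (0:ℤ) ≤ ⌊u⌋ := Int.floor_nonneg.2 hu0
    have hfl : (⌊u⌋:ℝ) ≤ u := Int.floor_le u
    have hfl1 : u < ⌊u⌋ + 1 := Int.lt_floor_add_one u
    -- the nearest integer point to u, staying within [0, r^n]
    rcases le_or_gt u ((⌊u⌋:ℝ) + 1/2) with hc | hc
    · -- nearest is ⌊u⌋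
      have hphi : phiTW u = u - ⌊u⌋ := phi_eq_left ⌊u⌋ hfl hc
      have hmem : ((⌊u⌋:ℝ)/(r:ℝ)^n) ∈ DTW r (n+1) := by
        rw [hD]
        refine ⟨⟨⌊u⌋, rfl⟩, ?_, ?_⟩
        · positivity
        · rw [div_le_one hp]; linarith
      calc gTW r (n+1) y ≤ dist y ((⌊u⌋:ℝ)/(r:ℝ)^n) := Metric.infDist_le_dist_of_mem hmem
        _ = G r n y := by
            rw [Real.dist_eq]
            unfold G
            rw [hphi]
            rw [abs_of_nonneg (by rw [sub_nonneg, div_le_iff₀ hp]; linarith)]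
            have e : ∀ w : ℝ, (1:ℝ)/(r:ℝ)^n * ((r:ℝ)^n*y - w) = y - w/(r:ℝ)^n := by
              intro w; field_simp
            rw [show (r:ℝ)^n * y = u from hu.symm] at e
            rw [e]
    · -- nearest is ⌊u⌋ + 1
      have hphi : phiTW u = ⌊u⌋ + 1 - u := phi_eq_right ⌊u⌋ hc.le hfl1.le
      have hle : (⌊u⌋:ℝ) + 1 ≤ (r:ℝ)^n := by
        have hcast : ((r^n:ℕ):ℝ) = (r:ℝ)^n := by push_cast; ring
        have hfloor_le : ⌊u⌋ ≤ (r^n : ℕ) := by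
          calc ⌊u⌋ ≤ ⌊((r^n:ℕ):ℝ)⌋ := Int.floor_le_floor (by rw [hcast]; exact hu1)
            _ = (r^n:ℕ) := Int.floor_natCast _
        have hne2 : ⌊u⌋ ≠ ((r^n : ℕ):ℤ) := by
          intro h
          have h2 : (⌊u⌋:ℝ) = (r:ℝ)^n := by rw [h]; exact hcast
          have : u = (⌊u⌋:ℝ) := le_antisymm (by rw [h2]; exact hu1) hfl
          linarith
        have : ⌊u⌋ + 1 ≤ ((r^n:ℕ):ℤ) := Int.add_one_le_iff.2 (lt_of_le_of_ne hfloor_le hne2)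
        have h9 : ((⌊u⌋:ℝ) + 1) ≤ ((r^n:ℕ):ℝ) := by exact_mod_cast this
        rw [hcast] at h9
        exact h9
      have hmem : (((⌊u⌋:ℝ)+1)/(r:ℝ)^n) ∈ DTW r (n+1) := by
        rw [hD]
        refine ⟨⟨⌊u⌋+1, by push_cast; ring⟩, ?_, ?_⟩
        · positivity
        · rw [div_le_one hp]; linarith
      calc gTW r (n+1) y ≤ dist y (((⌊u⌋:ℝ)+1)/(r:ℝ)^n) := Metric.infDist_le_dist_of_mem hmem
        _ = G r n y := by
            rw [Real.dist_eq]
            unfold G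
            rw [hphi]
            rw [abs_of_nonpos (by rw [sub_nonpos, le_div_iff₀ hp]; linarith), neg_sub]
            have e : ∀ w : ℝ, (1:ℝ)/(r:ℝ)^n * (w - (r:ℝ)^n*y) = w/(r:ℝ)^n - y := by
              intro w; field_simp
            rw [show (r:ℝ)^n * y = u from hu.symm] at e
            rw [show (⌊u⌋:ℝ) + 1 - u = ((⌊u⌋:ℝ) + 1) - u from rfl, e]
  · -- G ≤ gTW
    refine le_of_not_gt fun hlt => ?_
    rw [gTW] at hlt
    rcases (Metric.infDist_lt_iff hne).1 hlt with ⟨p, hpD, hdist⟩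
    rw [hD] at hpD
    obtain ⟨⟨k, rfl⟩, -⟩ := hpD
    refine absurd hdist (not_lt.2 ?_)
    rw [Real.dist_eq]
    have hphi := phi_le (y := (r:ℝ)^n * y) k
    have habs : |y - (k:ℝ)/(r:ℝ)^n| = (1/(r:ℝ)^n) * |(r:ℝ)^n * y - k| := by
      rw [← abs_of_pos (show (0:ℝ) < 1/(r:ℝ)^n by positivity), ← abs_mul]
      congr 1
      field_simp
    rw [habs]
    unfold G
    exact mul_le_mul_of_nonneg_left hphi (by positivity)


lemma limsup_top_of_freq {l : Filter ℝ} {Q : ℝ → ℝ} (h : ∀ M : ℝ, ∃ᶠ t in l, M ≤ Q t) :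
    Filter.limsup (fun t => ((Q t : ℝ) : EReal)) l = ⊤ := by
  rw [EReal.eq_top_iff_forall_lt]
  intro M
  have h2 : ((M+1 : ℝ) : EReal) ≤ Filter.limsup (fun t => ((Q t : ℝ) : EReal)) l :=
    le_limsup_of_frequently_le' ((h (M+1)).mono fun t ht => by exact_mod_cast ht)
  refine lt_of_lt_of_le ?_ h2
  exact_mod_cast (lt_add_one M)

lemma liminf_bot_of_freq {l : Filter ℝ} {Q : ℝ → ℝ} (h : ∀ M : ℝ, ∃ᶠ t in l, Q t ≤ M) :
    Filter.liminf (fun t => ((Q t : ℝ) : EReal)) l = ⊥ := by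
  rw [EReal.eq_bot_iff_forall_lt]
  intro M
  have h2 : Filter.liminf (fun t => ((Q t : ℝ) : EReal)) l ≤ ((M-1 : ℝ) : EReal) :=
    liminf_le_of_frequently_le' ((h (M-1)).mono fun t ht => by exact_mod_cast ht)
  refine lt_of_le_of_lt h2 ?_
  exact_mod_cast (sub_one_lt M)

lemma freq_right {P : ℝ → Prop} (h : ∀ ε : ℝ, 0 < ε → ∃ t, 0 < t ∧ t < ε ∧ P t) :
    ∃ᶠ t in 𝓝[>] (0:ℝ), P t := by
  rw [Filter.frequently_iff]
  intro U hU
  rcases Metric.mem_nhdsWithin_iff.1 hU with ⟨ε, hε, hsub⟩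
  rcases h ε hε with ⟨t, ht0, htε, hP⟩
  refine ⟨t, hsub ⟨?_, ht0⟩, hP⟩
  rw [Metric.mem_ball, Real.dist_eq, sub_zero, abs_of_pos ht0]
  exact htε

lemma freq_left {P : ℝ → Prop} (h : ∀ ε : ℝ, 0 < ε → ∃ t, -ε < t ∧ t < 0 ∧ P t) :
    ∃ᶠ t in 𝓝[<] (0:ℝ), P t := by
  rw [Filter.frequently_iff]
  intro U hU
  rcases Metric.mem_nhdsWithin_iff.1 hU with ⟨ε, hε, hsub⟩
  rcases h ε hε with ⟨t, ht0, htε, hP⟩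
  refine ⟨t, hsub ⟨?_, htε⟩, hP⟩
  rw [Metric.mem_ball, Real.dist_eq, sub_zero, abs_of_neg htε]
  linarith

end TW13

open TW13 in
theorem stmt13 (r : ℕ) (hr : 2 ≤ r) (x : ℝ) (hx : x ∈ Set.Icc (0:ℝ) 1)
    (hxD : x ∉ DTWall r ∪ DtTWall r)
    (s : ℕ → ℝ) (hs : ∀ k, 1 ≤ k → HasDerivAt (gTW r k) (s k) x) :
    (Tendsto (fun N => ∑ k ∈ Finset.Icc 1 N, s k) atTop atTop →
      Filter.limsup (fun t : ℝ => (((fTW r (x + t) - fTW r x) / t : ℝ) : EReal)) (𝓝[>] 0) = ⊤ ∧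
      Filter.limsup (fun t : ℝ => (((fTW r (x + t) - fTW r x) / t : ℝ) : EReal)) (𝓝[<] 0) = ⊤) ∧
    (Tendsto (fun N => ∑ k ∈ Finset.Icc 1 N, s k) atTop atBot →
      Filter.liminf (fun t : ℝ => (((fTW r (x + t) - fTW r x) / t : ℝ) : EReal)) (𝓝[>] 0) = ⊥ ∧
      Filter.liminf (fun t : ℝ => (((fTW r (x + t) - fTW r x) / t : ℝ) : EReal)) (𝓝[<] 0) = ⊥) := by
  classical
  have hr1 : (1:ℝ) < r := lt_of_lt_of_le one_lt_two (by exact_mod_cast hr)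
  -- x is interior
  have h0D : (0:ℝ) ∈ DTWall r :=
    Set.mem_iUnion₂.2 ⟨1, le_refl 1, ⟨⟨0, by simp⟩, by norm_num⟩⟩
  have h1D : (1:ℝ) ∈ DTWall r :=
    Set.mem_iUnion₂.2 ⟨1, le_refl 1, ⟨⟨1, by simp⟩, by norm_num⟩⟩
  have hx0 : 0 < x := by
    rcases lt_or_eq_of_le hx.1 with h | h
    · exact h
    · exact absurd (Or.inl (h ▸ h0D)) hxD
  have hx1 : x < 1 := by
    rcases lt_or_eq_of_le hx.2 with h | h
    · exact h
    · exact absurd (Or.inl (h.symm ▸ h1D)) hxD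
  -- x avoids all breakpoints
  have hlat : ∀ (n : ℕ) (j : ℤ), x ≠ (j:ℝ)/(2*(r:ℝ)^n) := by
    intro n j hEq
    have hp : (0:ℝ) < (r:ℝ)^n := Rpos hr
    rcases Int.even_or_odd j with ⟨i, hi⟩ | ⟨i, hi⟩
    · refine hxD (Or.inl (Set.mem_iUnion₂.2 ⟨n+1, Nat.le_add_left 1 n, ⟨⟨i, ?_⟩, hx⟩⟩))
      rw [hEq]
      simp only [Nat.add_sub_cancel]
      rw [div_eq_div_iff (by positivity) (by positivity)]
      push_cast [hi]
      ring
    · refine hxD (Or.inr (Set.mem_iUnion₂.2 ⟨n+1, Nat.le_add_left 1 n, ⟨⟨i, ?_⟩, hx⟩⟩))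
      rw [hEq]
      simp only [Nat.add_sub_cancel]
      rw [div_eq_div_iff (by positivity) (by positivity)]
      push_cast [hi]
      ring
  -- derivatives of the G's at x
  have hG : ∀ n : ℕ, HasDerivAt (G r n) (s (n+1)) x := by
    intro n
    have hd := hs (n+1) (Nat.le_add_left 1 n)
    have hEq : gTW r (n+1) =ᶠ[𝓝 x] G r n := by
      filter_upwards [Ioo_mem_nhds hx0 hx1] with y hy
      exact gTW_eq hr n ⟨hy.1.le, hy.2.le⟩
    exact hd.congr_of_eventuallyEq hEq.symm
  have hIcc : ∀ N : ℕ, ∑ k ∈ Finset.Icc 1 (N+1), s k = ∑ n ∈ Finset.range (N+1), s (n+1) := by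
    intro N
    rw [show Finset.Icc 1 (N+1) = Finset.Ico 1 (N+2) from (Finset.Ico_add_one_right_eq_Icc 1 (N+1)).symm]
    rw [Finset.sum_Ico_eq_sum_range]
    exact Finset.sum_congr (by norm_num) fun i _ => by rw [Nat.add_comm]
  -- two-sided quotient estimates
  have ESTpos : ∀ m : ℕ, ∃ t : ℝ, 0 < t ∧ t ≤ 1/(2*(r:ℝ)^m) ∧ ∃ N, m ≤ N ∧
      |(fTW r (x+t) - fTW r x)/t - ∑ k ∈ Finset.Icc 1 (N+1), s k| ≤ 2 := by
    intro m
    obtain ⟨t, ht, htm, N, hmN, hest⟩ := core hr hlat (fun n => s (n+1)) hG m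
    refine ⟨t, ht, htm, N, hmN, ?_⟩
    rw [hIcc, fTW_eq, fTW_eq]
    have e : ((∑' n, G r n (x+t)) - (∑' n, G r n x))/t - ∑ n ∈ Finset.range (N+1), s (n+1)
        = ((∑' n, G r n (x+t)) - (∑' n, G r n x) - (∑ n ∈ Finset.range (N+1), s (n+1)) * t)/t := by
      field_simp
    rw [e, abs_div, abs_of_pos ht, div_le_iff₀ ht]
    linarith [hest]
  have ESTneg : ∀ m : ℕ, ∃ t : ℝ, t < 0 ∧ -(1/(2*(r:ℝ)^m)) ≤ t ∧ ∃ N, m ≤ N ∧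
      |(fTW r (x+t) - fTW r x)/t - ∑ k ∈ Finset.Icc 1 (N+1), s k| ≤ 2 := by
    intro m
    have hlat' : ∀ (n : ℕ) (j : ℤ), -x ≠ (j:ℝ)/(2*(r:ℝ)^n) := by
      intro n j hEq
      refine hlat n (-j) ?_
      have := congrArg Neg.neg hEq
      rw [neg_neg] at this
      rw [this]
      push_cast
      ring
    have hG' : ∀ n : ℕ, HasDerivAt (G r n) (-(s (n+1))) (-x) := by
      intro n
      have hf : HasDerivAt (fun y : ℝ => -y) (-1) (-x) := hasDerivAt_neg _
      have hg : HasDerivAt (G r n) (s (n+1)) (-(-x)) := by rw [neg_neg]; exact hG n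
      have h1 := HasDerivAt.comp (-x) hg hf
      have h2 : (G r n ∘ fun y : ℝ => -y) = G r n := funext fun y => G_neg hr n y
      rw [h2] at h1
      simpa using h1
    obtain ⟨τ, hτ, hτm, N, hmN, hest⟩ := core hr hlat' (fun n => -(s (n+1))) hG' m
    refine ⟨-τ, by linarith, by linarith, N, hmN, ?_⟩
    rw [hIcc]
    have hfx : fTW r (x + -τ) = ∑' n, G r n (-x + τ) := by
      rw [show x + -τ = -(-x + τ) by ring, fTW_neg hr, fTW_eq]
    have hfx2 : fTW r x = ∑' n, G r n (-x) :=
      (fTW_neg hr x).symm.trans (fTW_eq r (-x))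
    rw [hfx, hfx2]
    have hsum : ∑ n ∈ Finset.range (N+1), (-(s (n+1))) = -(∑ n ∈ Finset.range (N+1), s (n+1)) := by
      rw [Finset.sum_neg_distrib]
    rw [hsum] at hest
    set A := (∑' n, G r n (-x + τ)) - (∑' n, G r n (-x)) with hA
    have e : A/(-τ) - ∑ n ∈ Finset.range (N+1), s (n+1)
        = -((A + (∑ n ∈ Finset.range (N+1), s (n+1)) * τ)/τ) := by
      rw [div_neg, add_div, mul_div_cancel_right₀ _ (ne_of_gt hτ)]
      ring
    rw [e, abs_neg, abs_div, abs_of_pos hτ, div_le_iff₀ hτ]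
    have : |A - (-(∑ n ∈ Finset.range (N+1), s (n+1))) * τ| = |A + (∑ n ∈ Finset.range (N+1), s (n+1)) * τ| := by
      congr 1; ring
    rw [this] at hest
    linarith [hest]
  -- epsilon-smallness of steps
  have hsmall : ∀ (m₀ : ℕ) (ε : ℝ), 0 < ε → ∃ m : ℕ, m₀ ≤ m ∧ 1/(2*(r:ℝ)^m) < ε := by
    intro m₀ ε hε
    obtain ⟨m₁, hm₁⟩ := pow_unbounded_of_one_lt (1/(2*ε)) hr1
    refine ⟨max m₀ m₁, le_max_left _ _, ?_⟩
    have hpow : 1/(2*ε) < (r:ℝ)^(max m₀ m₁) :=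
      lt_of_lt_of_le hm₁ (pow_le_pow_right₀ (by linarith) (le_max_right _ _))
    rw [div_lt_iff₀ (by positivity)] at hpow ⊢
    nlinarith
  constructor
  · intro hT
    have hEv : ∀ M : ℝ, ∃ m₀ : ℕ, ∀ n ≥ m₀, M ≤ ∑ k ∈ Finset.Icc 1 n, s k := fun M =>
      Filter.eventually_atTop.1 (Filter.tendsto_atTop.1 hT M)
    constructor
    · refine limsup_top_of_freq fun M => freq_right fun ε hε => ?_
      obtain ⟨m₀, hm₀⟩ := hEv (M+2)
      obtain ⟨m, hmm, hmε⟩ := hsmall m₀ ε hε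
      obtain ⟨t, ht0, htm, N, hmN, hest⟩ := ESTpos m
      refine ⟨t, ht0, lt_of_le_of_lt htm hmε, ?_⟩
      have hSN : M + 2 ≤ ∑ k ∈ Finset.Icc 1 (N+1), s k := hm₀ (N+1) (by omega)
      have := (abs_le.1 hest).1
      linarith
    · refine limsup_top_of_freq fun M => freq_left fun ε hε => ?_
      obtain ⟨m₀, hm₀⟩ := hEv (M+2)
      obtain ⟨m, hmm, hmε⟩ := hsmall m₀ ε hε
      obtain ⟨t, ht0, htm, N, hmN, hest⟩ := ESTneg m
      refine ⟨t, by linarith, ht0, ?_⟩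
      have hSN : M + 2 ≤ ∑ k ∈ Finset.Icc 1 (N+1), s k := hm₀ (N+1) (by omega)
      have := (abs_le.1 hest).1
      linarith
  · intro hB
    have hEv : ∀ M : ℝ, ∃ m₀ : ℕ, ∀ n ≥ m₀, ∑ k ∈ Finset.Icc 1 n, s k ≤ M := fun M =>
      Filter.eventually_atTop.1 (Filter.tendsto_atBot.1 hB M)
    constructor
    · refine liminf_bot_of_freq fun M => freq_right fun ε hε => ?_
      obtain ⟨m₀, hm₀⟩ := hEv (M-2)
      obtain ⟨m, hmm, hmε⟩ := hsmall m₀ ε hε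
      obtain ⟨t, ht0, htm, N, hmN, hest⟩ := ESTpos m
      refine ⟨t, ht0, lt_of_le_of_lt htm hmε, ?_⟩
      have hSN : ∑ k ∈ Finset.Icc 1 (N+1), s k ≤ M - 2 := hm₀ (N+1) (by omega)
      have := (abs_le.1 hest).2
      linarith
    · refine liminf_bot_of_freq fun M => freq_left fun ε hε => ?_
      obtain ⟨m₀, hm₀⟩ := hEv (M-2)
      obtain ⟨m, hmm, hmε⟩ := hsmall m₀ ε hε
      obtain ⟨t, ht0, htm, N, hmN, hest⟩ := ESTneg m
      refine ⟨t, by linarith, ht0, ?_⟩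
      have hSN : ∑ k ∈ Finset.Icc 1 (N+1), s k ≤ M - 2 := hm₀ (N+1) (by omega)
      have := (abs_le.1 hest).2
      linarith
end

section
/- For every real r > 1 and every real ℓ ≥ 2, there exists x₀ ∈ (0, ℓ) such that r^{-x₀}(ℓ - x₀) + x₀ < log_r ℓ + 3. -/
open Set Filter MeasureTheory Metric Topology

theorem stmt16 (r : ℝ) (hr : 1 < r) (l : ℝ) (hl : 2 ≤ l) :
    ∃ x₀ ∈ Set.Ioo (0:ℝ) l, r ^ (-x₀) * (l - x₀) + x₀ < Real.logb r l + 3 := by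
  have hl0 : (0:ℝ) < l := by linarith
  have hr0 : (0:ℝ) < r := lt_trans zero_lt_one hr
  have hlog : 0 < Real.logb r l := Real.logb_pos hr (by linarith)
  by_cases h : Real.logb r l < l
  · refine ⟨Real.logb r l, ⟨hlog, h⟩, ?_⟩
    have he : r ^ (-Real.logb r l) = l⁻¹ := by
      rw [Real.rpow_neg hr0.le, Real.rpow_logb hr0 (ne_of_gt hr) hl0]
    rw [he]
    have h1 : l⁻¹ * (l - Real.logb r l) ≤ 1 := by
      rw [inv_mul_le_iff₀ hl0]
      nlinarith
    linarith
  · push_neg at h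
    refine ⟨l/2, ⟨by linarith, by linarith⟩, ?_⟩
    have hx : r ^ (-(l/2)) ≤ 1 :=
      Real.rpow_le_one_of_one_le_of_nonpos hr.le (by linarith)
    have hpos : 0 < r ^ (-(l/2)) := Real.rpow_pos_of_pos hr0 _
    nlinarith
end
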